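/- arXiv:1404.5524 — 5 statements merged into one kernel-verified Lean document; each statement's English description precedes it below -/
import Mathlib

section
/- Let x ∈ ℝ^{2n+4} have all coordinates strictly positive. Then x is a steady state (Γ·R(x) = 0) if and only if there exists a real number α > 0 such that Ψ(x) = α·ρ. -/
open Matrix Finset

noncomputable section

/-- The `m`-th (1-based) standard basis vector of `ℝ^(2n+4)`. -/
def E (n : ℕ) (m : ℕ) : Fin (2*n+4) → ℝ := fun j => if (j : ℕ) + 1 = m then 1 else 0

/-- The value of a vector `x ∈ ℝ^(2n+4)` at the (1-based) math index `m`. -/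
def X (n : ℕ) (x : Fin (2*n+4) → ℝ) (m : ℕ) : ℝ :=
  if h : m - 1 < 2*n+4 then x ⟨m - 1, h⟩ else 0

/-- The stoichiometric matrix `Γ` of the processive `n`-site phosphorylation network;
columns are indexed 1-based as in the paper. -/
def Gamma (n : ℕ) : Matrix (Fin (2*n+4)) (Fin (2*n+2)) ℝ :=
  Matrix.of fun r c0 =>
    (let c := (c0 : ℕ) + 1
     if c = 1 then E n 5 - E n 1 - E n 3
     else if c ≤ n then E n (2*(c-1)+5) - E n (2*(c-1)+3)
     else if c = n+1 then E n 1 + E n 4 - E n (2*n+3)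
     else if c = n+2 then E n (2*n+4) - E n 2 - E n 4
     else if c ≤ 2*n+1 then E n (2*n+4-2*(c-(n+2))) - E n (2*n+6-2*(c-(n+2)))
     else E n 2 + E n 3 - E n 6) r

/-- The mass-action reaction rate function `R : ℝ^(2n+4) → ℝ^(2n+2)` of the processive
`n`-site phosphorylation network (coordinates indexed 1-based). -/
def Rvec (n : ℕ) (k l : ℕ → ℝ) (x : Fin (2*n+4) → ℝ) : Fin (2*n+2) → ℝ := fun a0 =>
  let a := (a0 : ℕ) + 1
  if a = 1 then k 1 * X n x 1 * X n x 3 - k 2 * X n x 5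
  else if a ≤ n then
    k (2*(a-1)+1) * X n x (2*(a-1)+3) - k (2*(a-1)+2) * X n x (2*(a-1)+5)
  else if a = n+1 then k (2*n+1) * X n x (2*n+3)
  else if a = n+2 then l (2*n+1) * X n x 2 * X n x 4 - l (2*n) * X n x (2*n+4)
  else if a ≤ 2*n+1 then
    l (2*(n-(a-(n+2)))+1) * X n x (2*(n-(a-(n+2)))+6)
      - l (2*(n-(a-(n+2)))) * X n x (2*(n-(a-(n+2)))+4)
  else l 1 * X n x 6

/-- The label of the edge `a → b` (nodes 1-based in `{1, …, 2n+2}`) in the labeled digraph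
underlying the translated processive network; `0` if there is no such edge. -/
def lab (n : ℕ) (k l : ℕ → ℝ) (a b : ℕ) : ℝ :=
  if 1 ≤ a ∧ a ≤ n ∧ b = a+1 then k (2*a-1)
  else if 1 ≤ b ∧ b ≤ n ∧ a = b+1 then k (2*b)
  else if a = n+1 ∧ b = n+2 then k (2*n+1)
  else if n+2 ≤ a ∧ a ≤ 2*n+1 ∧ b = a+1 then l (2*(n+1-(a-(n+1)))+1)
  else if n+3 ≤ a ∧ a ≤ 2*n+2 ∧ b+1 = a then l (2*(n+1-(a-(n+2))))
  else if a = 2*n+2 ∧ b = 1 then l 1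
  else 0

/-- The matrix `Ã_κᵗ` of the translated processive network: for `j ≠ i` the `(j,i)` entry
is the label of the edge `i → j` (or `0`), and the `(i,i)` entry is minus the sum of the
labels of all edges leaving node `i`. -/
def Atilde (n : ℕ) (k l : ℕ → ℝ) : Matrix (Fin (2*n+2)) (Fin (2*n+2)) ℝ :=
  Matrix.of fun j i =>
    if j = i then -(∑ b ∈ Finset.range (2*n+3), lab n k l ((i : ℕ)+1) b)
    else lab n k l ((i : ℕ)+1) ((j : ℕ)+1)

/-- The monomial map `Ψ : ℝ^(2n+4) → ℝ^(2n+2)` of the translated processive network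
(coordinates indexed 1-based). -/
def Psi (n : ℕ) (x : Fin (2*n+4) → ℝ) : Fin (2*n+2) → ℝ := fun a0 =>
  let a := (a0 : ℕ) + 1
  if a = 1 then X n x 1 * X n x 3
  else if a ≤ n+1 then X n x (2*a+1)
  else if a = n+2 then X n x 2 * X n x 4
  else X n x (2*n+6-2*(a-(n+2)))


/-! ### Auxiliary definitions -/

/-- Label of the forward edge `m → m+1` (0 if none). -/
def outL (n : ℕ) (k l : ℕ → ℝ) (m : ℕ) : ℝ :=
  if m = 0 ∨ 2*n+2 ≤ m then 0
  else if m ≤ n then k (2*m-1)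
  else if m = n+1 then k (2*n+1)
  else l (2*(2*n+2-m)+1)

/-- Label of the backward edge `m → m-1` (0 if none). -/
def outR (n : ℕ) (k l : ℕ → ℝ) (m : ℕ) : ℝ :=
  if m ≤ 1 ∨ m = n+2 ∨ 2*n+3 ≤ m then 0
  else if m ≤ n+1 then k (2*m-2)
  else l (2*(2*n+3-m))

/-- 1-based access to a vector in `ℝ^(2n+2)`. -/
def V (n : ℕ) (v : Fin (2*n+2) → ℝ) (m : ℕ) : ℝ :=
  if h : m - 1 < 2*n+2 then v ⟨m - 1, h⟩ else 0

/-- The net flux along edge `j` (from node `j` to its successor). -/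
def Fl (n : ℕ) (k l : ℕ → ℝ) (v : Fin (2*n+2) → ℝ) (j : ℕ) : ℝ :=
  (if j = 2*n+2 then l 1 else outL n k l j) * V n v j - outR n k l (j+1) * V n v (j+1)

/-- Predecessor of node `j` in the cycle. -/
def prev (n j : ℕ) : ℕ := if j = 1 then 2*n+2 else j - 1

/-- The (1-based) index of the column of `Γ` where species `s` occurs with `+1`. -/
def posc (n s : ℕ) : ℕ :=
  if s = 1 then n+1 else if s = 2 then 2*n+2 else if s = 3 then 2*n+2
  else if s = 4 then n+1 else if s % 2 = 1 then (s-3)/2 else n+2+(2*n+4-s)/2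

/-- The (1-based) index of the column of `Γ` where species `s` occurs with `-1`. -/
def negc (n s : ℕ) : ℕ :=
  if s = 1 then 1 else if s = 2 then n+2 else if s = 3 then 1
  else if s = 4 then n+2 else if s % 2 = 1 then (s-3)/2+1 else n+3+(2*n+4-s)/2

lemma pos_range (n s : ℕ) (hn : 1 ≤ n) (h1 : 1 ≤ s) (h2 : s ≤ 2*n+4) :
    1 ≤ posc n s ∧ posc n s ≤ 2*n+2 := by
  unfold posc; split_ifs <;> omega

lemma neg_range (n s : ℕ) (hn : 1 ≤ n) (h1 : 1 ≤ s) (h2 : s ≤ 2*n+4) :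
    1 ≤ negc n s ∧ negc n s ≤ 2*n+2 := by
  unfold negc; split_ifs <;> omega

lemma lab_eq (n : ℕ) (k l : ℕ → ℝ) (a b : ℕ) (hn : 1 ≤ n) (ha1 : 1 ≤ a) (ha2 : a ≤ 2*n+2) :
    lab n k l a b =
      (if b = a+1 then outL n k l a else 0) + (if b+1 = a then outR n k l a else 0)
        + (if a = 2*n+2 ∧ b = 1 then l 1 else 0) := by
  unfold lab outL outR
  split_ifs <;>
    first
      | rfl
      | (exfalso; omega)
      | (simp only [add_zero, zero_add]; try first | rfl | (congr 1 <;> omega))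

lemma lab_diag (n : ℕ) (k l : ℕ → ℝ) (m : ℕ) : lab n k l m m = 0 := by
  unfold lab; split_ifs <;> first | rfl | (exfalso; omega)

lemma sum_ind (N : ℕ) (w : Fin N → ℝ) (p : ℕ) (h1 : 1 ≤ p) (h2 : p ≤ N) :
    (∑ c : Fin N, (if (c : ℕ) + 1 = p then (1:ℝ) else 0) * w c) = w ⟨p-1, by omega⟩ := by
  rw [Fintype.sum_eq_single (⟨p-1, by omega⟩ : Fin N)]
  · rw [if_pos (by simp; omega), one_mul]
  · intro b hb
    rw [if_neg, zero_mul]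
    intro hc
    exact hb (Fin.ext (by simpa using (by omega : (b:ℕ) = p - 1)))


lemma outL_zero_left (n : ℕ) (k l : ℕ → ℝ) : outL n k l 0 = 0 := by
  unfold outL; rw [if_pos (Or.inl rfl)]

lemma outL_zero_top (n : ℕ) (k l : ℕ → ℝ) : outL n k l (2*n+2) = 0 := by
  unfold outL; rw [if_pos (Or.inr le_rfl)]

lemma outR_zero_one (n : ℕ) (k l : ℕ → ℝ) : outR n k l 1 = 0 := by
  unfold outR; rw [if_pos (Or.inl le_rfl)]

lemma outR_zero_top (n : ℕ) (k l : ℕ → ℝ) : outR n k l (2*n+3) = 0 := by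
  unfold outR; rw [if_pos (Or.inr (Or.inr le_rfl))]

lemma outR_zero_mid (n : ℕ) (k l : ℕ → ℝ) : outR n k l (n+2) = 0 := by
  unfold outR; rw [if_pos (Or.inr (Or.inl rfl))]

lemma V_top_zero (n : ℕ) (v : Fin (2*n+2) → ℝ) : V n v (2*n+3) = 0 := by
  unfold V; rw [dif_neg (by omega)]

lemma V_val (n : ℕ) (v : Fin (2*n+2) → ℝ) (m : ℕ) (h : m - 1 < 2*n+2) :
    V n v m = v ⟨m-1, h⟩ := dif_pos h

lemma V_val' (n : ℕ) (v : Fin (2*n+2) → ℝ) (m : ℕ) (i : Fin (2*n+2)) (h : m = (i:ℕ)+1) :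
    V n v m = v i := by
  subst h; unfold V; rw [dif_pos (by omega)]
  exact congrArg v (Fin.ext (by simp))

lemma sum_delta' (N : ℕ) (w : Fin N → ℝ) (c : ℝ) (q : ℕ) (hq : q < N) :
    ∑ i : Fin N, (if (i:ℕ) = q then c else 0) * w i = c * w ⟨q, hq⟩ := by
  rw [Fintype.sum_eq_single (⟨q, hq⟩ : Fin N)]
  · rw [if_pos rfl]
  · intro b hb
    rw [if_neg fun h => hb (Fin.ext h), zero_mul]

lemma sum_delta0 (N : ℕ) (w : Fin N → ℝ) (c : ℝ) (q : ℕ) (hq : N ≤ q) :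
    ∑ i : Fin N, (if (i:ℕ) = q then c else 0) * w i = 0 := by
  apply Finset.sum_eq_zero
  intro i _
  rw [if_neg (by omega), zero_mul]

lemma sum_lab_out (n : ℕ) (k l : ℕ → ℝ) (hn : 1 ≤ n) (m : ℕ) (hm1 : 1 ≤ m) (hm2 : m ≤ 2*n+2) :
    ∑ b ∈ Finset.range (2*n+3), lab n k l m b
      = outL n k l m + outR n k l m + (if m = 2*n+2 then l 1 else 0) := by
  rw [Finset.sum_congr rfl (fun b _ => lab_eq n k l m b hn hm1 hm2),
    Finset.sum_add_distrib, Finset.sum_add_distrib]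
  congr 1
  · congr 1
    · rw [Finset.sum_ite_eq' (Finset.range (2*n+3)) (m+1) (fun _ => outL n k l m)]
      by_cases h : m = 2*n+2
      · rw [if_neg (by simp [h]), h, outL_zero_top]
      · rw [if_pos (Finset.mem_range.mpr (by omega))]
    · rw [Finset.sum_eq_single (m-1)]
      · rw [if_pos (by omega)]
      · intro c _ hc; rw [if_neg (by omega)]
      · intro h; exact absurd (Finset.mem_range.mpr (by omega)) h
  · by_cases h : m = 2*n+2
    · rw [if_pos h]
      have hc : ∀ b ∈ Finset.range (2*n+3),
          (if m = 2*n+2 ∧ b = 1 then l 1 else 0) = (if b = 1 then l 1 else 0) := by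
        intro b _; by_cases hb : b = 1 <;> simp [h, hb]
      rw [Finset.sum_congr rfl hc,
        Finset.sum_ite_eq' (Finset.range (2*n+3)) 1 (fun _ => l 1),
        if_pos (Finset.mem_range.mpr (by omega))]
    · rw [if_neg h]
      apply Finset.sum_eq_zero
      intro b _; rw [if_neg (by tauto)]

lemma sum_lab_in (n : ℕ) (k l : ℕ → ℝ) (hn : 1 ≤ n) (m : ℕ) (hm1 : 1 ≤ m) (hm2 : m ≤ 2*n+2)
    (v : Fin (2*n+2) → ℝ) :
    ∑ i : Fin (2*n+2), lab n k l ((i:ℕ)+1) m * v i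
      = outL n k l (m-1) * V n v (m-1) + outR n k l (m+1) * V n v (m+1)
        + (if m = 1 then l 1 * V n v (2*n+2) else 0) := by
  have hcong : ∀ i : Fin (2*n+2), lab n k l ((i:ℕ)+1) m * v i =
      (if (i:ℕ) = m-2 then outL n k l (m-1) else 0) * v i
      + (if (i:ℕ) = m then outR n k l (m+1) else 0) * v i
      + (if (i:ℕ) = 2*n+1 then (if m = 1 then l 1 else 0) else 0) * v i := by
    intro i
    have e1 : (if m = (i:ℕ)+1+1 then outL n k l ((i:ℕ)+1) else 0)
        = (if (i:ℕ) = m-2 then outL n k l (m-1) else 0) := by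
      by_cases h : (i:ℕ) = m-2
      · by_cases h2 : 2 ≤ m
        · rw [if_pos (by omega), if_pos h]; congr 1; omega
        · rw [if_neg (by omega), if_pos h, show m-1 = 0 by omega, outL_zero_left]
      · rw [if_neg (by omega), if_neg h]
    have e2 : (if m+1 = (i:ℕ)+1 then outR n k l ((i:ℕ)+1) else 0)
        = (if (i:ℕ) = m then outR n k l (m+1) else 0) := by
      by_cases h : (i:ℕ) = m
      · rw [if_pos (by omega), if_pos h]; congr 1; omega
      · rw [if_neg (by omega), if_neg h]
    have e3 : (if (i:ℕ)+1 = 2*n+2 ∧ m = 1 then l 1 else 0)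
        = (if (i:ℕ) = 2*n+1 then (if m = 1 then l 1 else 0) else 0) := by
      by_cases h : (i:ℕ) = 2*n+1
      · by_cases h2 : m = 1
        · rw [if_pos (by omega), if_pos h, if_pos h2]
        · rw [if_neg (by omega), if_pos h, if_neg h2]
      · rw [if_neg (by omega), if_neg h]
    rw [lab_eq n k l ((i:ℕ)+1) m hn (by omega) (by omega), e1, e2, e3, add_mul, add_mul]
  rw [Fintype.sum_congr _ _ hcong, Finset.sum_add_distrib, Finset.sum_add_distrib]
  have S1 : ∑ i : Fin (2*n+2), (if (i:ℕ) = m-2 then outL n k l (m-1) else 0) * v i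
      = outL n k l (m-1) * V n v (m-1) := by
    by_cases h2 : 2 ≤ m
    · rw [sum_delta' (2*n+2) v _ (m-2) (by omega), V_val n v (m-1) (by omega)]
      exact congrArg _ (congrArg v (Fin.ext (show m-2 = m-1-1 by omega)))
    · have hm : m = 1 := by omega
      subst hm
      simp only [show (1:ℕ) - 1 = 0 from rfl, outL_zero_left, zero_mul]
      simp
  have S2 : ∑ i : Fin (2*n+2), (if (i:ℕ) = m then outR n k l (m+1) else 0) * v i
      = outR n k l (m+1) * V n v (m+1) := by
    by_cases h2 : m ≤ 2*n+1
    · rw [sum_delta' (2*n+2) v _ m (by omega), V_val n v (m+1) (by omega)]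
      exact congrArg _ (congrArg v (Fin.ext (show m = m+1-1 by omega)))
    · have hm : m = 2*n+2 := by omega
      subst hm
      rw [sum_delta0 (2*n+2) v _ (2*n+2) le_rfl, show 2*n+2+1 = 2*n+3 from rfl,
        outR_zero_top, zero_mul]
  have S3 : ∑ i : Fin (2*n+2), (if (i:ℕ) = 2*n+1 then (if m = 1 then l 1 else 0) else 0) * v i
      = (if m = 1 then l 1 * V n v (2*n+2) else 0) := by
    by_cases h2 : m = 1
    · rw [if_pos h2, if_pos h2, sum_delta' (2*n+2) v _ (2*n+1) (by omega),
        V_val n v (2*n+2) (by omega)]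
      exact congrArg _ (congrArg v (Fin.ext (show 2*n+1 = 2*n+2-1 by omega)))
    · simp only [if_neg h2]
      simp
  rw [S1, S2, S3]


lemma Atilde_row (n : ℕ) (k l : ℕ → ℝ) (hn : 1 ≤ n) (v : Fin (2*n+2) → ℝ)
    (j : Fin (2*n+2)) :
    (Atilde n k l).mulVec v j
      = Fl n k l v (prev n ((j:ℕ)+1)) - Fl n k l v ((j:ℕ)+1) := by
  have hj := j.isLt
  have expand : (Atilde n k l).mulVec v j
      = (∑ i : Fin (2*n+2), lab n k l ((i:ℕ)+1) ((j:ℕ)+1) * v i)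
        + (-(∑ b ∈ Finset.range (2*n+3), lab n k l ((j:ℕ)+1) b)
            - lab n k l ((j:ℕ)+1) ((j:ℕ)+1)) * v j := by
    have pt : ∀ i : Fin (2*n+2), Atilde n k l j i * v i
        = lab n k l ((i:ℕ)+1) ((j:ℕ)+1) * v i
          + (if j = i then (-(∑ b ∈ Finset.range (2*n+3), lab n k l ((j:ℕ)+1) b)
              - lab n k l ((j:ℕ)+1) ((j:ℕ)+1)) * v i else 0) := by
      intro i
      by_cases h : j = i
      · subst h
        simp only [Atilde, Matrix.of_apply, eq_self_iff_true, if_true]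
        ring
      · simp only [Atilde, Matrix.of_apply, if_neg h]
        ring
    show (∑ i, Atilde n k l j i * v i) = _
    rw [Fintype.sum_congr _ _ pt, Finset.sum_add_distrib]
    congr 1
    rw [Fintype.sum_eq_single j]
    · rw [if_pos rfl]
    · intro b hb
      rw [if_neg fun h => hb h.symm]
  rw [expand, sum_lab_in n k l hn ((j:ℕ)+1) (by omega) (by omega) v,
    sum_lab_out n k l hn ((j:ℕ)+1) (by omega) (by omega), lab_diag,
    show v j = V n v ((j:ℕ)+1) from (V_val' n v _ j rfl).symm]
  have hb1 : 1 ≤ (j:ℕ)+1 := by omega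
  have hb2 : (j:ℕ)+1 ≤ 2*n+2 := by omega
  generalize hm : (j:ℕ)+1 = m at hb1 hb2 ⊢
  by_cases h1 : m = 1
  · subst h1
    rw [show prev n 1 = 2*n+2 from by unfold prev; rw [if_pos rfl]]
    unfold Fl
    rw [if_pos (rfl : (1:ℕ) = 1)]
    rw [if_pos (rfl : 2*n+2 = 2*n+2)]
    rw [if_neg (show (1:ℕ) ≠ 2*n+2 by omega)]
    rw [if_neg (show (1:ℕ) ≠ 2*n+2 by omega)]
    rw [show (1:ℕ)-1 = 0 from rfl, outL_zero_left, outR_zero_one,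
      show 2*n+2+1 = 2*n+3 from rfl, outR_zero_top]
    ring
  · by_cases h2 : m = 2*n+2
    · subst h2
      rw [show prev n (2*n+2) = 2*n+1 from by unfold prev; rw [if_neg (by omega)]; omega]
      unfold Fl
      rw [if_neg (show 2*n+2 ≠ 1 by omega)]
      rw [if_pos (rfl : 2*n+2 = 2*n+2)]
      rw [if_pos (rfl : 2*n+2 = 2*n+2)]
      rw [if_neg (show 2*n+1 ≠ 2*n+2 by omega)]
      rw [show 2*n+1+1 = 2*n+2 from rfl]
      rw [show 2*n+2+1 = 2*n+3 from rfl, outR_zero_top, outL_zero_top,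
        show 2*n+2-1 = 2*n+1 from by omega]
      ring
    · rw [show prev n m = m-1 from by unfold prev; rw [if_neg h1]]
      unfold Fl
      rw [if_neg h1]
      rw [if_neg h2]
      rw [if_neg h2]
      rw [if_neg (show m-1 ≠ 2*n+2 by omega)]
      rw [show m-1+1 = m from by omega]
      ring

lemma flux_const (n : ℕ) (k l : ℕ → ℝ) (hn : 1 ≤ n) (v : Fin (2*n+2) → ℝ)
    (h : (Atilde n k l).mulVec v = 0) :
    ∀ j, 1 ≤ j → j ≤ 2*n+2 → Fl n k l v j = Fl n k l v 1 := by
  intro j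
  induction j with
  | zero => omega
  | succ p ih =>
    intro h1 h2
    by_cases hp : p = 0
    · subst hp; rfl
    · have hrow : Fl n k l v (prev n (p+1)) - Fl n k l v (p+1) = 0 := by
        have hcf := congrFun h (⟨p, by omega⟩ : Fin (2*n+2))
        rw [Atilde_row n k l hn v] at hcf
        simpa using hcf
      have hprev : prev n (p+1) = p := by unfold prev; rw [if_neg (by omega)]; omega
      rw [hprev, sub_eq_zero] at hrow
      rw [← hrow]
      exact ih (by omega) (by omega)

lemma Aker_of_const (n : ℕ) (k l : ℕ → ℝ) (hn : 1 ≤ n) (v : Fin (2*n+2) → ℝ)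
    (h : ∀ j, 1 ≤ j → j ≤ 2*n+2 → Fl n k l v j = Fl n k l v 1) :
    (Atilde n k l).mulVec v = 0 := by
  funext j
  have hj := j.isLt
  rw [Atilde_row n k l hn v j]
  have hp : 1 ≤ prev n ((j:ℕ)+1) ∧ prev n ((j:ℕ)+1) ≤ 2*n+2 := by
    unfold prev; split_ifs <;> omega
  rw [h _ hp.1 hp.2, h ((j:ℕ)+1) (by omega) (by omega), sub_self]
  simp


lemma outL_eval_low (n : ℕ) (k l : ℕ → ℝ) (m : ℕ) (h1 : 1 ≤ m) (h2 : m ≤ n) :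
    outL n k l m = k (2*m-1) := by
  unfold outL; rw [if_neg (by omega), if_pos h2]

lemma outL_eval_mid (n : ℕ) (k l : ℕ → ℝ) : outL n k l (n+1) = k (2*n+1) := by
  unfold outL; rw [if_neg (by omega), if_neg (by omega), if_pos rfl]

lemma outL_eval_high (n : ℕ) (k l : ℕ → ℝ) (m : ℕ) (h1 : n+2 ≤ m) (h2 : m ≤ 2*n+1) :
    outL n k l m = l (2*(2*n+2-m)+1) := by
  unfold outL; rw [if_neg (by omega), if_neg (by omega), if_neg (by omega)]

lemma outR_eval_low (n : ℕ) (k l : ℕ → ℝ) (m : ℕ) (h1 : 2 ≤ m) (h2 : m ≤ n+1) :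
    outR n k l m = k (2*m-2) := by
  unfold outR; rw [if_neg (by omega), if_pos h2]

lemma outR_eval_high (n : ℕ) (k l : ℕ → ℝ) (m : ℕ) (h1 : n+3 ≤ m) (h2 : m ≤ 2*n+2) :
    outR n k l m = l (2*(2*n+3-m)) := by
  unfold outR; rw [if_neg (by omega), if_neg (by omega)]

lemma Psi_apply (n : ℕ) (x : Fin (2*n+4) → ℝ) (i : Fin (2*n+2)) :
    Psi n x i =
      if (i:ℕ)+1 = 1 then X n x 1 * X n x 3
      else if (i:ℕ)+1 ≤ n+1 then X n x (2*((i:ℕ)+1)+1)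
      else if (i:ℕ)+1 = n+2 then X n x 2 * X n x 4
      else X n x (2*n+6-2*(((i:ℕ)+1)-(n+2))) := rfl

lemma V_Psi (n : ℕ) (x : Fin (2*n+4) → ℝ) (m : ℕ) (h1 : 1 ≤ m) (h2 : m ≤ 2*n+2) :
    V n (Psi n x) m =
      if m = 1 then X n x 1 * X n x 3
      else if m ≤ n+1 then X n x (2*m+1)
      else if m = n+2 then X n x 2 * X n x 4
      else X n x (2*n+6-2*(m-(n+2))) := by
  rw [V_val n _ m (by omega), Psi_apply]
  dsimp only
  rw [show m-1+1 = m by omega]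

lemma VPsi_one (n : ℕ) (x : Fin (2*n+4) → ℝ) (hn : 1 ≤ n) :
    V n (Psi n x) 1 = X n x 1 * X n x 3 := by
  rw [V_Psi n x 1 le_rfl (by omega), if_pos rfl]

lemma VPsi_low (n : ℕ) (x : Fin (2*n+4) → ℝ) (m : ℕ) (h1 : 2 ≤ m) (h2 : m ≤ n+1) :
    V n (Psi n x) m = X n x (2*m+1) := by
  rw [V_Psi n x m (by omega) (by omega), if_neg (by omega), if_pos h2]

lemma VPsi_mid (n : ℕ) (x : Fin (2*n+4) → ℝ) (hn : 1 ≤ n) :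
    V n (Psi n x) (n+2) = X n x 2 * X n x 4 := by
  rw [V_Psi n x (n+2) (by omega) (by omega), if_neg (by omega), if_neg (by omega), if_pos rfl]

lemma VPsi_high (n : ℕ) (x : Fin (2*n+4) → ℝ) (m : ℕ) (h1 : n+3 ≤ m) (h2 : m ≤ 2*n+2) :
    V n (Psi n x) m = X n x (2*n+6-2*(m-(n+2))) := by
  rw [V_Psi n x m (by omega) (by omega), if_neg (by omega), if_neg (by omega), if_neg (by omega)]

lemma Rvec_apply (n : ℕ) (k l : ℕ → ℝ) (x : Fin (2*n+4) → ℝ) (a0 : Fin (2*n+2)) :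
    Rvec n k l x a0 =
      (if (a0:ℕ)+1 = 1 then k 1 * X n x 1 * X n x 3 - k 2 * X n x 5
      else if (a0:ℕ)+1 ≤ n then
        k (2*(((a0:ℕ)+1)-1)+1) * X n x (2*(((a0:ℕ)+1)-1)+3)
          - k (2*(((a0:ℕ)+1)-1)+2) * X n x (2*(((a0:ℕ)+1)-1)+5)
      else if (a0:ℕ)+1 = n+1 then k (2*n+1) * X n x (2*n+3)
      else if (a0:ℕ)+1 = n+2 then l (2*n+1) * X n x 2 * X n x 4 - l (2*n) * X n x (2*n+4)
      else if (a0:ℕ)+1 ≤ 2*n+1 then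
        l (2*(n-(((a0:ℕ)+1)-(n+2)))+1) * X n x (2*(n-(((a0:ℕ)+1)-(n+2)))+6)
          - l (2*(n-(((a0:ℕ)+1)-(n+2)))) * X n x (2*(n-(((a0:ℕ)+1)-(n+2)))+4)
      else l 1 * X n x 6) := rfl

lemma Rvec_eq_Fl (n : ℕ) (k l : ℕ → ℝ) (hn : 1 ≤ n) (x : Fin (2*n+4) → ℝ)
    (a0 : Fin (2*n+2)) :
    Rvec n k l x a0 = Fl n k l (Psi n x) ((a0:ℕ)+1) := by
  have ha := a0.isLt
  rw [Rvec_apply]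
  unfold Fl
  have hb1 : 1 ≤ (a0:ℕ)+1 := by omega
  have hb2 : (a0:ℕ)+1 ≤ 2*n+2 := by omega
  generalize hs : (a0:ℕ)+1 = s at hb1 hb2 ⊢
  have hcase : s = 1 ∨ (2 ≤ s ∧ s ≤ n) ∨ s = n+1 ∨ s = n+2
      ∨ (n+3 ≤ s ∧ s ≤ 2*n+1) ∨ s = 2*n+2 := by omega
  rcases hcase with h | ⟨ha1, ha2⟩ | h | h | ⟨ha1, ha2⟩ | h
  · subst h
    rw [if_pos rfl, if_neg (show (1:ℕ) ≠ 2*n+2 by omega), outL_eval_low n k l 1 le_rfl hn,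
      VPsi_one n x hn, outR_eval_low n k l (1+1) le_rfl (by omega),
      VPsi_low n x (1+1) le_rfl (by omega)]
    norm_num [mul_assoc]
  · rw [if_neg (by omega), if_pos ha2, if_neg (by omega),
      outL_eval_low n k l s (by omega) ha2, VPsi_low n x s (by omega) (by omega),
      outR_eval_low n k l (s+1) (by omega) (by omega), VPsi_low n x (s+1) (by omega) (by omega),
      show 2*(s-1)+1 = 2*s-1 by omega, show 2*(s-1)+3 = 2*s+1 by omega,
      show 2*(s-1)+2 = 2*(s+1)-2 by omega, show 2*(s-1)+5 = 2*(s+1)+1 by omega]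
  · subst h
    rw [if_neg (by omega), if_neg (by omega), if_pos rfl, if_neg (by omega),
      outL_eval_mid, VPsi_low n x (n+1) (by omega) le_rfl,
      show n+1+1 = n+2 from rfl, outR_zero_mid, zero_mul, sub_zero,
      show 2*(n+1)+1 = 2*n+3 by omega]
  · subst h
    rw [if_neg (by omega), if_neg (by omega), if_neg (by omega), if_pos rfl,
      if_neg (by omega), outL_eval_high n k l (n+2) le_rfl (by omega),
      VPsi_mid n x hn, show n+2+1 = n+3 from rfl,
      outR_eval_high n k l (n+3) le_rfl (by omega),
      VPsi_high n x (n+3) le_rfl (by omega),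
      show 2*(2*n+2-(n+2))+1 = 2*n+1 by omega, show 2*(2*n+3-(n+3)) = 2*n by omega,
      show 2*n+6-2*(n+3-(n+2)) = 2*n+4 by omega]
    ring
  · rw [if_neg (by omega), if_neg (by omega), if_neg (by omega), if_neg (by omega),
      if_pos ha2, if_neg (by omega),
      outL_eval_high n k l s (by omega) ha2, VPsi_high n x s (by omega) (by omega),
      outR_eval_high n k l (s+1) (by omega) (by omega),
      VPsi_high n x (s+1) (by omega) (by omega),
      show 2*(n-(s-(n+2)))+1 = 2*(2*n+2-s)+1 by omega,
      show 2*(n-(s-(n+2)))+6 = 2*n+6-2*(s-(n+2)) by omega,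
      show 2*(n-(s-(n+2)))+4 = 2*n+6-2*(s+1-(n+2)) by omega,
      show 2*(n-(s-(n+2))) = 2*(2*n+3-(s+1)) by omega]
  · subst h
    rw [if_neg (by omega), if_neg (by omega), if_neg (by omega), if_neg (by omega),
      if_neg (by omega), if_pos rfl, show 2*n+2+1 = 2*n+3 from rfl, outR_zero_top,
      zero_mul, sub_zero, VPsi_high n x (2*n+2) (by omega) le_rfl,
      show 2*n+6-2*(2*n+2-(n+2)) = 6 by omega]


lemma Gamma_apply (n : ℕ) (r : Fin (2*n+4)) (c : Fin (2*n+2)) :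
    Gamma n r c =
      (if (c:ℕ)+1 = 1 then E n 5 - E n 1 - E n 3
       else if (c:ℕ)+1 ≤ n then E n (2*(((c:ℕ)+1)-1)+5) - E n (2*(((c:ℕ)+1)-1)+3)
       else if (c:ℕ)+1 = n+1 then E n 1 + E n 4 - E n (2*n+3)
       else if (c:ℕ)+1 = n+2 then E n (2*n+4) - E n 2 - E n 4
       else if (c:ℕ)+1 ≤ 2*n+1 then
         E n (2*n+4-2*(((c:ℕ)+1)-(n+2))) - E n (2*n+6-2*(((c:ℕ)+1)-(n+2)))
       else E n 2 + E n 3 - E n 6) r := rfl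

lemma Gamma_entry (n : ℕ) (hn : 1 ≤ n) (r : Fin (2*n+4)) (c : Fin (2*n+2)) :
    Gamma n r c = (if (c:ℕ)+1 = posc n ((r:ℕ)+1) then 1 else 0)
      - (if (c:ℕ)+1 = negc n ((r:ℕ)+1) then 1 else 0) := by
  have hr := r.isLt
  have hc := c.isLt
  rw [Gamma_apply]
  have hb1 : 1 ≤ (c:ℕ)+1 := by omega
  have hb2 : (c:ℕ)+1 ≤ 2*n+2 := by omega
  have hs1 : 1 ≤ (r:ℕ)+1 := by omega
  have hs2 : (r:ℕ)+1 ≤ 2*n+4 := by omega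
  generalize hcc : (c:ℕ)+1 = cc at hb1 hb2 ⊢
  generalize hss : (r:ℕ)+1 = ss at hs1 hs2
  have hE : ∀ m, E n m r = if ss = m then 1 else 0 := by
    intro m; unfold E; rw [hss]
  have hcase : cc = 1 ∨ (2 ≤ cc ∧ cc ≤ n) ∨ cc = n+1 ∨ cc = n+2
      ∨ (n+3 ≤ cc ∧ cc ≤ 2*n+1) ∨ cc = 2*n+2 := by omega
  rcases hcase with h | ⟨h1, h2⟩ | h | h | ⟨h1, h2⟩ | h
  · have hp : (cc = posc n ss) ↔ (ss = 5) := by unfold posc; split_ifs <;> omega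
    have hq : (cc = negc n ss) ↔ (ss = 1 ∨ ss = 3) := by unfold negc; split_ifs <;> omega
    rw [if_pos h, Pi.sub_apply, Pi.sub_apply, hE, hE, hE]
    simp only [hp, hq]
    split_ifs <;> first | (exfalso; omega) | norm_num
  · have hp : (cc = posc n ss) ↔ (ss = 2*cc+3) := by unfold posc; split_ifs <;> omega
    have hq : (cc = negc n ss) ↔ (ss = 2*cc+1) := by unfold negc; split_ifs <;> omega
    rw [if_neg (by omega), if_pos (by omega), Pi.sub_apply, hE, hE]
    simp only [hp, hq]
    rw [show 2*(cc-1)+5 = 2*cc+3 by omega, show 2*(cc-1)+3 = 2*cc+1 by omega]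
    try split_ifs <;> first | (exfalso; omega) | norm_num
  · have hp : (cc = posc n ss) ↔ (ss = 1 ∨ ss = 4) := by
      unfold posc; split_ifs <;> omega
    have hq : (cc = negc n ss) ↔ (ss = 2*n+3) := by unfold negc; split_ifs <;> omega
    rw [if_neg (by omega), if_neg (by omega), if_pos h, Pi.sub_apply, Pi.add_apply,
      hE, hE, hE]
    simp only [hp, hq]
    split_ifs <;> first | (exfalso; omega) | norm_num
  · have hp : (cc = posc n ss) ↔ (ss = 2*n+4) := by unfold posc; split_ifs <;> omega
    have hq : (cc = negc n ss) ↔ (ss = 2 ∨ ss = 4) := by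
      unfold negc; split_ifs <;> omega
    rw [if_neg (by omega), if_neg (by omega), if_neg (by omega), if_pos h,
      Pi.sub_apply, Pi.sub_apply, hE, hE, hE]
    simp only [hp, hq]
    split_ifs <;> first | (exfalso; omega) | norm_num
  · have hp : (cc = posc n ss) ↔ (ss = 2*n+4-2*(cc-(n+2))) := by
      unfold posc; split_ifs <;> omega
    have hq : (cc = negc n ss) ↔ (ss = 2*n+6-2*(cc-(n+2))) := by
      unfold negc; split_ifs <;> omega
    rw [if_neg (by omega), if_neg (by omega), if_neg (by omega), if_neg (by omega),
      if_pos (by omega), Pi.sub_apply, hE, hE]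
    simp only [hp, hq]
    try split_ifs <;> first | (exfalso; omega) | norm_num
  · have hp : (cc = posc n ss) ↔ (ss = 2 ∨ ss = 3) := by
      unfold posc; split_ifs <;> omega
    have hq : (cc = negc n ss) ↔ (ss = 6) := by unfold negc; split_ifs <;> omega
    rw [if_neg (by omega), if_neg (by omega), if_neg (by omega), if_neg (by omega),
      if_neg (by omega), Pi.sub_apply, Pi.add_apply, hE, hE, hE]
    simp only [hp, hq]
    split_ifs <;> first | (exfalso; omega) | norm_num

lemma Gamma_row (n : ℕ) (k l : ℕ → ℝ) (hn : 1 ≤ n) (R : Fin (2*n+2) → ℝ)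
    (r : Fin (2*n+4)) :
    (Gamma n).mulVec R r = V n R (posc n ((r:ℕ)+1)) - V n R (negc n ((r:ℕ)+1)) := by
  have hr := r.isLt
  have hpos := pos_range n ((r:ℕ)+1) hn (by omega) (by omega)
  have hneg := neg_range n ((r:ℕ)+1) hn (by omega) (by omega)
  show (∑ c, Gamma n r c * R c) = _
  rw [Finset.sum_congr rfl (fun c _ => by rw [Gamma_entry n hn r c, sub_mul]),
    Finset.sum_sub_distrib, sum_ind _ R _ hpos.1 hpos.2, sum_ind _ R _ hneg.1 hneg.2,
    V_val n R _ (by omega), V_val n R _ (by omega)]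


lemma ker_unique (n : ℕ) (k l : ℕ → ℝ) (hn : 1 ≤ n)
    (hk : ∀ i, 1 ≤ i → i ≤ 2*n+1 → 0 < k i) (hl : ∀ i, 1 ≤ i → i ≤ 2*n+1 → 0 < l i)
    (v : Fin (2*n+2) → ℝ) (hA : (Atilde n k l).mulVec v = 0)
    (h0 : V n v 1 = 0) : v = 0 := by
  have hF := flux_const n k l hn v hA
  set c := Fl n k l v 1 with hc
  have flux_low : ∀ j, 1 ≤ j → j ≤ n →
      k (2*j-1) * V n v j - k (2*j) * V n v (j+1) = c := by
    intro j h1 h2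
    have h := hF j (by omega) (by omega)
    rw [Fl, if_neg (by omega), outL_eval_low n k l j h1 h2,
      outR_eval_low n k l (j+1) (by omega) (by omega),
      show 2*(j+1)-2 = 2*j by omega] at h
    exact h
  have flux_mid : k (2*n+1) * V n v (n+1) = c := by
    have h := hF (n+1) (by omega) (by omega)
    rw [Fl, if_neg (by omega), outL_eval_mid, show n+1+1 = n+2 from rfl, outR_zero_mid,
      zero_mul, sub_zero] at h
    exact h
  have flux_high : ∀ j, n+2 ≤ j → j ≤ 2*n+1 →
      l (2*(2*n+2-j)+1) * V n v j - l (2*(2*n+2-j)) * V n v (j+1) = c := by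
    intro j h1 h2
    have h := hF j (by omega) (by omega)
    rw [Fl, if_neg (by omega), outL_eval_high n k l j h1 h2,
      outR_eval_high n k l (j+1) (by omega) (by omega),
      show 2*(2*n+3-(j+1)) = 2*(2*n+2-j) by omega] at h
    exact h
  have flux_top : l 1 * V n v (2*n+2) = c := by
    have h := hF (2*n+2) (by omega) le_rfl
    rw [Fl, if_pos rfl, show 2*n+2+1 = 2*n+3 from rfl, outR_zero_top,
      zero_mul, sub_zero] at h
    exact h
  have chain_le : 0 ≤ c → ∀ j, 1 ≤ j → j ≤ n+1 → V n v j ≤ 0 := by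
    intro hcpos j
    induction j with
    | zero => omega
    | succ p ih =>
      intro h1 h2
      by_cases hp : p = 0
      · subst hp
        rw [show (0:ℕ)+1 = 1 from rfl, h0]
      · have heq := flux_low p (by omega) (by omega)
        have hVp := ih (by omega) (by omega)
        have hk1 := hk (2*p-1) (by omega) (by omega)
        have hk2 := hk (2*p) (by omega) (by omega)
        nlinarith [mul_nonneg hk1.le (neg_nonneg.mpr hVp)]
  have chain_ge : c ≤ 0 → ∀ j, 1 ≤ j → j ≤ n+1 → 0 ≤ V n v j := by
    intro hcneg j
    induction j with
    | zero => omega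
    | succ p ih =>
      intro h1 h2
      by_cases hp : p = 0
      · subst hp
        rw [show (0:ℕ)+1 = 1 from rfl, h0]
      · have heq := flux_low p (by omega) (by omega)
        have hVp := ih (by omega) (by omega)
        have hk1 := hk (2*p-1) (by omega) (by omega)
        have hk2 := hk (2*p) (by omega) (by omega)
        nlinarith [mul_nonneg hk1.le hVp]
  have hc0 : c = 0 := by
    rcases lt_trichotomy c 0 with hlt | heq | hgt
    · exfalso
      have hVn := chain_ge hlt.le n (by omega) (by omega)
      have heqn := flux_low n (by omega) le_rfl
      have hk1 := hk (2*n-1) (by omega) (by omega)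
      have hk2 := hk (2*n) (by omega) (by omega)
      have hk3 := hk (2*n+1) (by omega) (by omega)
      have hVn1 : 0 < V n v (n+1) := by nlinarith [mul_nonneg hk1.le hVn]
      nlinarith [flux_mid, mul_pos hk3 hVn1]
    · exact heq
    · exfalso
      have hVn := chain_le hgt.le n (by omega) (by omega)
      have heqn := flux_low n (by omega) le_rfl
      have hk1 := hk (2*n-1) (by omega) (by omega)
      have hk2 := hk (2*n) (by omega) (by omega)
      have hk3 := hk (2*n+1) (by omega) (by omega)
      have hVn1 : V n v (n+1) < 0 := by nlinarith [mul_nonneg hk1.le (neg_nonneg.mpr hVn)]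
      nlinarith [flux_mid, mul_neg_of_pos_of_neg hk3 hVn1]
  have zero_up : ∀ j, 1 ≤ j → j ≤ n+1 → V n v j = 0 := by
    intro j
    induction j with
    | zero => omega
    | succ p ih =>
      intro h1 h2
      by_cases hp : p = 0
      · subst hp
        rw [show (0:ℕ)+1 = 1 from rfl, h0]
      · have heq := flux_low p (by omega) (by omega)
        rw [ih (by omega) (by omega), mul_zero, hc0, zero_sub, neg_eq_zero] at heq
        have hk2 := hk (2*p) (by omega) (by omega)
        exact (mul_eq_zero.mp heq).resolve_left (ne_of_gt hk2)
  have hVtop : V n v (2*n+2) = 0 := by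
    have h := flux_top
    rw [hc0] at h
    have hl1 := hl 1 le_rfl (by omega)
    exact (mul_eq_zero.mp h).resolve_left (ne_of_gt hl1)
  have zero_down : ∀ t, t ≤ n → V n v (2*n+2-t) = 0 := by
    intro t
    induction t with
    | zero => intro _; rw [Nat.sub_zero]; exact hVtop
    | succ p ih =>
      intro hp
      have heq := flux_high (2*n+1-p) (by omega) (by omega)
      have hprev : V n v (2*n+1-p+1) = 0 := by
        rw [show 2*n+1-p+1 = 2*n+2-p by omega]
        exact ih (by omega)
      rw [hprev, mul_zero, hc0, sub_zero] at heq
      have hlp := hl (2*(2*n+2-(2*n+1-p))+1) (by omega) (by omega)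
      rw [show 2*n+2-(p+1) = 2*n+1-p by omega]
      exact (mul_eq_zero.mp heq).resolve_left (ne_of_gt hlp)
  funext i
  have hi := i.isLt
  have hV : V n v ((i:ℕ)+1) = 0 := by
    by_cases h : (i:ℕ)+1 ≤ n+1
    · exact zero_up _ (by omega) h
    · have h2 := zero_down (2*n+1-(i:ℕ)) (by omega)
      rw [show 2*n+2-(2*n+1-(i:ℕ)) = (i:ℕ)+1 by omega] at h2
      exact h2
  rw [V_val' n v _ i rfl] at hV
  simpa using hV

/-- A positive `x` is a steady state of the processive `n`-site system if and only if
`Ψ(x) = α·ρ` for some `α > 0`, where `ρ` is a positive vector spanning `ker Ã_κᵗ`. -/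
theorem steady_state_iff_scalar_multiple (n : ℕ) (hn : 1 ≤ n) (k l : ℕ → ℝ)
    (hk : ∀ i, 1 ≤ i → i ≤ 2*n+1 → 0 < k i)
    (hl : ∀ i, 1 ≤ i → i ≤ 2*n+1 → 0 < l i)
    (ρ : Fin (2*n+2) → ℝ) (hρ : ∀ i, 0 < ρ i)
    (hker : (Atilde n k l).mulVec ρ = 0)
    (x : Fin (2*n+4) → ℝ) (hx : ∀ i, 0 < x i) :
    (Gamma n).mulVec (Rvec n k l x) = 0 ↔ ∃ α : ℝ, 0 < α ∧ Psi n x = α • ρ := by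
  -- the flux of `Ψ(x)` along edge `j` is the `j`-th reaction rate
  have hRF : ∀ j, 1 ≤ j → j ≤ 2*n+2 →
      Fl n k l (Psi n x) j = V n (Rvec n k l x) j := by
    intro j h1 h2
    rw [V_val n _ j (by omega), Rvec_eq_Fl n k l hn x ⟨j-1, by omega⟩]
    congr 1
    exact (by omega : j = j-1+1)
  constructor
  · intro hsteady
    -- every row of `Γ·R(x) = 0` gives an equality between two rates
    have hrow : ∀ s, 1 ≤ s → s ≤ 2*n+4 →
        V n (Rvec n k l x) (posc n s) = V n (Rvec n k l x) (negc n s) := by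
      intro s h1 h2
      have h := congrFun hsteady ⟨s-1, by omega⟩
      rw [Gamma_row n k l hn _ ⟨s-1, by omega⟩] at h
      have hval : ((⟨s-1, by omega⟩ : Fin (2*n+4)) : ℕ) + 1 = s := by
        simp only [Fin.val_mk]; omega
      rw [hval] at h
      simpa [sub_eq_zero] using h
    -- hence all reaction rates are equal
    have hR : ∀ j, 1 ≤ j → j ≤ 2*n+2 →
        V n (Rvec n k l x) j = V n (Rvec n k l x) 1 := by
      intro j
      induction j with
      | zero => omega
      | succ p ih =>
        intro h1 h2
        by_cases hp : p = 0
        · subst hp; rfl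
        · by_cases hcase : p ≤ n
          · have h := hrow (2*p+3) (by omega) (by omega)
            rw [show posc n (2*p+3) = p from by unfold posc; split_ifs <;> omega,
              show negc n (2*p+3) = p+1 from by unfold negc; split_ifs <;> omega] at h
            rw [← h]
            exact ih (by omega) (by omega)
          · by_cases hcase2 : p = n+1
            · have h := hrow 4 (by omega) (by omega)
              rw [show posc n 4 = n+1 from by unfold posc; split_ifs <;> omega,
                show negc n 4 = n+2 from by unfold negc; split_ifs <;> omega] at h
              rw [show p+1 = n+2 by omega, ← h, show n+1 = p by omega]
              exact ih (by omega) (by omega)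
            · have h := hrow (2*n+4-2*(p-(n+2))) (by omega) (by omega)
              rw [show posc n (2*n+4-2*(p-(n+2))) = p from by
                    unfold posc; split_ifs <;> omega,
                show negc n (2*n+4-2*(p-(n+2))) = p+1 from by
                    unfold negc; split_ifs <;> omega] at h
              rw [← h]
              exact ih (by omega) (by omega)
    -- so `Ã·Ψ(x) = 0`
    have hAker : (Atilde n k l).mulVec (Psi n x) = 0 := by
      apply Aker_of_const n k l hn
      intro j h1 h2
      rw [hRF j h1 h2, hRF 1 le_rfl (by omega)]
      exact hR j h1 h2
    -- positivity of the relevant quantities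
    have hψ0 : 0 < Psi n x ⟨0, by omega⟩ := by
      rw [Psi_apply, if_pos rfl]
      unfold X
      rw [dif_pos (by omega), dif_pos (by omega)]
      exact mul_pos (hx _) (hx _)
    have hρ0 := hρ ⟨0, by omega⟩
    set α := Psi n x ⟨0, by omega⟩ / ρ ⟨0, by omega⟩ with hα
    have hαpos : 0 < α := div_pos hψ0 hρ0
    refine ⟨α, hαpos, ?_⟩
    have hAw : (Atilde n k l).mulVec (Psi n x - α • ρ) = 0 := by
      rw [Matrix.mulVec_sub, Matrix.mulVec_smul, hAker, hker, smul_zero, sub_zero]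
    have hw0 : V n (Psi n x - α • ρ) 1 = 0 := by
      rw [V_val n _ 1 (by omega)]
      show Psi n x ⟨0, _⟩ - α • ρ ⟨0, _⟩ = 0
      rw [smul_eq_mul, hα, div_mul_cancel₀ _ (ne_of_gt hρ0), sub_self]
    have := ker_unique n k l hn hk hl _ hAw hw0
    rw [sub_eq_zero] at this
    exact this
  · rintro ⟨α, hα, hψ⟩
    have hAker : (Atilde n k l).mulVec (Psi n x) = 0 := by
      rw [hψ, Matrix.mulVec_smul, hker, smul_zero]
    have hFl := flux_const n k l hn _ hAker
    funext r
    have hr := r.isLt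
    rw [Gamma_row n k l hn _ r]
    have hpos := pos_range n ((r:ℕ)+1) hn (by omega) (by omega)
    have hneg := neg_range n ((r:ℕ)+1) hn (by omega) (by omega)
    rw [← hRF _ hpos.1 hpos.2, ← hRF _ hneg.1 hneg.2,
      hFl _ hpos.1 hpos.2, hFl _ hneg.1 hneg.2, sub_self]
    simp

end
end

section
/- The set of positive steady states of the processive n-site phosphorylation system, i.e. { x ∈ ℝ^{2n+4} : all coordinates of x are strictly positive and Γ·R(x) = 0 }, equals the image of the map χ. -/
open Matrix Finset

noncomputable section

/-- The value of a vector `ρ ∈ ℝ^(2n+2)` at the (1-based) math index `m`. -/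
def Pget (n : ℕ) (ρ : Fin (2*n+2) → ℝ) (m : ℕ) : ℝ :=
  if h : m - 1 < 2*n+2 then ρ ⟨m - 1, h⟩ else 0

/-- The parametrization `χ` of the positive steady states of the processive `n`-site
network (coordinates indexed 1-based): coordinate 1 is `(ρ₁/ρ_{2n+2})·(x₆/x₃)`,
coordinate 2 is `x₂`, coordinate 3 is `x₃`, coordinate 4 is `(ρ_{n+2}/ρ_{2n+2})·(x₆/x₂)`,
coordinate `2i+3` is `(ρ_{i+1}/ρ_{2n+2})·x₆` for `1 ≤ i ≤ n`, coordinate 6 is `x₆`, and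
coordinate `2i+6` is `(ρ_{2n+2-i}/ρ_{2n+2})·x₆` for `1 ≤ i ≤ n-1`. -/
def chi (n : ℕ) (ρ : Fin (2*n+2) → ℝ) (x2 x3 x6 : ℝ) : Fin (2*n+4) → ℝ := fun r =>
  let m := (r : ℕ) + 1
  if m = 1 then (Pget n ρ 1 / Pget n ρ (2*n+2)) * (x6 / x3)
  else if m = 2 then x2
  else if m = 3 then x3
  else if m = 4 then (Pget n ρ (n+2) / Pget n ρ (2*n+2)) * (x6 / x2)
  else if m = 6 then x6
  else if m % 2 = 1 then (Pget n ρ ((m-3)/2 + 1) / Pget n ρ (2*n+2)) * x6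
  else (Pget n ρ (2*n+2 - (m-6)/2) / Pget n ρ (2*n+2)) * x6

namespace ProcAux

/-- forward edge label out of node `a`. -/
def fwL (n : ℕ) (k l : ℕ → ℝ) (a : ℕ) : ℝ :=
  if 1 ≤ a ∧ a ≤ n then k (2*a-1)
  else if a = n+1 then k (2*n+1)
  else if n+2 ≤ a ∧ a ≤ 2*n+1 then l (2*(2*n+2-a)+1)
  else if a = 2*n+2 then l 1
  else 0

/-- backward edge label out of node `a` (towards `a-1`). -/
def bwL (n : ℕ) (k l : ℕ → ℝ) (a : ℕ) : ℝ :=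
  if 2 ≤ a ∧ a ≤ n+1 then k (2*(a-1))
  else if n+3 ≤ a ∧ a ≤ 2*n+2 then l (2*(2*n+3-a))
  else 0

def nxtI (n a : ℕ) : ℕ := if a = 2*n+2 then 1 else a+1
def prvI (n a : ℕ) : ℕ := if a = 1 then 2*n+2 else a-1

/-- the flux through the edge pair `a ↔ a+1` for node values `w` (1-based). -/
def FlX (n : ℕ) (k l : ℕ → ℝ) (w : ℕ → ℝ) (a : ℕ) : ℝ :=
  fwL n k l a * w a - bwL n k l (a+1) * w (a+1)

/-- node values of the translated network associated to a concentration vector `x`. -/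
def Yx (n : ℕ) (x : Fin (2*n+4) → ℝ) (a : ℕ) : ℝ :=
  if a = 1 then X n x 1 * X n x 3
  else if a ≤ n+1 then X n x (2*a+1)
  else if a = n+2 then X n x 2 * X n x 4
  else if a ≤ 2*n+2 then X n x (4*n+10-2*a)
  else 0

def Pidx (n m : ℕ) : ℕ :=
  if m = 1 then n+1 else if m = 2 then 2*n+2 else if m = 3 then 2*n+2
  else if m = 4 then n+1 else if m % 2 = 1 then (m-3)/2 else 2*n+2 - (m-4)/2

def Qidx (n m : ℕ) : ℕ :=
  if m = 1 then 1 else if m = 2 then n+2 else if m = 3 then 1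
  else if m = 4 then n+2 else if m % 2 = 1 then (m-3)/2+1 else 2*n+3 - (m-4)/2

set_option maxHeartbeats 1000000 in
theorem lab_eq (n : ℕ) (hn : 1 ≤ n) (k l : ℕ → ℝ) (a b : ℕ) (h1 : 1 ≤ a) (h2 : a ≤ 2*n+2) :
    lab n k l a b =
      (if b = nxtI n a then fwL n k l a else 0)
        + (if b + 1 = a then bwL n k l a else 0) := by
  unfold lab fwL bwL nxtI
  split_ifs <;>
    first
      | omega
      | (rw [add_zero]; congr 1; omega)
      | (rw [zero_add]; congr 1; omega)
      | (rw [add_zero])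
      | (rw [zero_add])
      | norm_num

theorem lab_self (n : ℕ) (k l : ℕ → ℝ) (a : ℕ) : lab n k l a a = 0 := by
  unfold lab; split_ifs <;> first | rfl | omega

theorem bwL_one (n : ℕ) (k l : ℕ → ℝ) : bwL n k l 1 = 0 := by
  unfold bwL; split_ifs <;> first | rfl | omega

theorem bwL_top (n : ℕ) (k l : ℕ → ℝ) : bwL n k l (2*n+3) = 0 := by
  unfold bwL; split_ifs <;> first | rfl | omega

theorem sum_pick {N : ℕ} (f : Fin N → ℝ) (p : ℕ) (h1 : 1 ≤ p) (h2 : p ≤ N) :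
    (∑ c : Fin N, if (c : ℕ) + 1 = p then f c else 0) = f ⟨p-1, by omega⟩ := by
  rw [Finset.sum_eq_single (⟨p-1, by omega⟩ : Fin N)]
  · rw [if_pos (by simp; omega)]
  · intro b _ hb
    rw [if_neg]
    intro h
    exact hb (Fin.ext (by simp; omega))
  · intro h; exact absurd (Finset.mem_univ _) h

theorem outsum (n : ℕ) (hn : 1 ≤ n) (k l : ℕ → ℝ) (a : ℕ) (h1 : 1 ≤ a) (h2 : a ≤ 2*n+2) :
    (∑ b ∈ Finset.range (2*n+3), lab n k l a b) = fwL n k l a + bwL n k l a := by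
  have : ∀ b ∈ Finset.range (2*n+3), lab n k l a b =
      (if b = nxtI n a then fwL n k l a else 0) + (if b + 1 = a then bwL n k l a else 0) :=
    fun b _ => lab_eq n hn k l a b h1 h2
  rw [Finset.sum_congr rfl this, Finset.sum_add_distrib]
  have e1 : (∑ b ∈ Finset.range (2*n+3), if b = nxtI n a then fwL n k l a else 0)
      = fwL n k l a := by
    rw [Finset.sum_ite_eq' (Finset.range (2*n+3)) (nxtI n a) (fun _ => fwL n k l a),
      if_pos]
    unfold nxtI; split_ifs <;> simp <;> omega
  have e2 : (∑ b ∈ Finset.range (2*n+3), if b + 1 = a then bwL n k l a else 0)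
      = bwL n k l a := by
    have : ∀ b ∈ Finset.range (2*n+3), (if b + 1 = a then bwL n k l a else 0)
        = (if b = a - 1 then bwL n k l a else 0) := by
      intro b _; apply if_congr _ rfl rfl; omega
    rw [Finset.sum_congr rfl this,
      Finset.sum_ite_eq' (Finset.range (2*n+3)) (a-1) (fun _ => bwL n k l a),
      if_pos]
    simp; omega
  rw [e1, e2]
theorem Pget_mk (n : ℕ) (ρ : Fin (2*n+2) → ℝ) (p : ℕ) (h : p - 1 < 2*n+2) :
    Pget n ρ p = ρ ⟨p-1, h⟩ := dif_pos h

theorem Pget_out (n : ℕ) (ρ : Fin (2*n+2) → ℝ) : Pget n ρ (2*n+3) = 0 :=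
  dif_neg (by omega)

theorem prvI_bounds (n m : ℕ) (h1 : 1 ≤ m) (h2 : m ≤ 2*n+2) :
    1 ≤ prvI n m ∧ prvI n m ≤ 2*n+2 := by unfold prvI; split_ifs <;> omega

theorem row_flux (n : ℕ) (hn : 1 ≤ n) (k l : ℕ → ℝ) (ρ : Fin (2*n+2) → ℝ)
    (hker : (Atilde n k l).mulVec ρ = 0) :
    ∀ m, 1 ≤ m → m ≤ 2*n+2 →
      FlX n k l (Pget n ρ) (prvI n m) = FlX n k l (Pget n ρ) m := by
  intro m h1 h2
  have hj : m - 1 < 2*n+2 := by omega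
  set j : Fin (2*n+2) := ⟨m-1, hj⟩ with hjdef
  have hjm : (j : ℕ) + 1 = m := by simp [hjdef]; omega
  have hrow : (Atilde n k l).mulVec ρ j = 0 := by rw [hker]; rfl
  have hp := prvI_bounds n m h1 h2
  have hterm : ∀ i : Fin (2*n+2), Atilde n k l j i * ρ i =
      ((if ((i : ℕ)+1 = prvI n m) then fwL n k l ((i:ℕ)+1) * ρ i else 0)
        + (if ((i : ℕ)+1 = m+1) then bwL n k l ((i:ℕ)+1) * ρ i else 0))
      - (if i = j then (fwL n k l m + bwL n k l m) * ρ i else 0) := by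
    intro i
    have hi1 : 1 ≤ (i:ℕ)+1 := by omega
    have hi2 : (i:ℕ)+1 ≤ 2*n+2 := by omega
    have hcond : ((i : ℕ)+1 = prvI n m) ↔ (m = nxtI n ((i:ℕ)+1)) := by
      unfold prvI nxtI; split_ifs <;> omega
    by_cases hij : i = j
    · have him : (i:ℕ)+1 = m := by rw [hij]; exact hjm
      rw [if_pos hij, if_neg, if_neg]
      · show Atilde n k l j i * ρ i = 0 + 0 - _
        rw [Atilde, Matrix.of_apply, if_pos (by rw [hij]), him,
          outsum n hn k l m h1 h2]
        ring
      · rw [him]; omega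
      · rw [hcond, him]; unfold nxtI; split_ifs <;> omega
    · rw [if_neg hij]
      have hne : j ≠ i := fun h => hij h.symm
      rw [Atilde, Matrix.of_apply, if_neg hne, hjm,
        lab_eq n hn k l ((i:ℕ)+1) m hi1 hi2]
      have hA' : (m = nxtI n ((i:ℕ)+1)) ↔ ((i:ℕ)+1 = prvI n m) := hcond.symm
      have hB' : (m + 1 = (i:ℕ)+1) ↔ ((i:ℕ)+1 = m+1) := by omega
      simp only [hA', hB', add_mul, ite_mul, zero_mul, sub_zero]
  have hsum : (Atilde n k l).mulVec ρ j =
      fwL n k l (prvI n m) * Pget n ρ (prvI n m) + bwL n k l (m+1) * Pget n ρ (m+1)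
        - (fwL n k l m + bwL n k l m) * Pget n ρ m := by
    rw [Matrix.mulVec, dotProduct]
    rw [Finset.sum_congr rfl (fun i _ => hterm i), Finset.sum_sub_distrib,
      Finset.sum_add_distrib]
    have e1 : (∑ i : Fin (2*n+2), if ((i : ℕ)+1 = prvI n m) then fwL n k l ((i:ℕ)+1) * ρ i else 0)
        = fwL n k l (prvI n m) * Pget n ρ (prvI n m) := by
      rw [sum_pick (fun i => fwL n k l ((i:ℕ)+1) * ρ i) (prvI n m) hp.1 hp.2]
      rw [Pget_mk n ρ (prvI n m) (by omega)]
      congr 2 <;> simp <;> omega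
    have e2 : (∑ i : Fin (2*n+2), if ((i : ℕ)+1 = m+1) then bwL n k l ((i:ℕ)+1) * ρ i else 0)
        = bwL n k l (m+1) * Pget n ρ (m+1) := by
      rcases Nat.lt_or_ge m (2*n+2) with hm | hm
      · rw [sum_pick (fun i => bwL n k l ((i:ℕ)+1) * ρ i) (m+1) (by omega) (by omega)]
        rw [Pget_mk n ρ (m+1) (by omega)]
        congr 2 <;> simp <;> omega
      · have hm' : m = 2*n+2 := by omega
        subst hm'
        rw [Pget_out, mul_zero]
        apply Finset.sum_eq_zero
        intro i _
        rw [if_neg (by omega)]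
      -- done
    have e3 : (∑ i : Fin (2*n+2), if i = j then (fwL n k l m + bwL n k l m) * ρ i else 0)
        = (fwL n k l m + bwL n k l m) * Pget n ρ m := by
      rw [Finset.sum_ite_eq' Finset.univ j fun i => (fwL n k l m + bwL n k l m) * ρ i,
        if_pos (Finset.mem_univ _)]
      rw [Pget_mk n ρ m (by omega)]
    rw [e1, e2, e3]
  rw [hrow] at hsum
  unfold FlX
  rcases Nat.lt_or_ge 1 m with hm | hm
  · have hpm : prvI n m = m - 1 := by unfold prvI; split_ifs <;> omega
    rw [hpm] at hsum ⊢
    have : m - 1 + 1 = m := by omega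
    rw [this]
    linarith
  · have hm' : m = 1 := by omega
    subst hm'
    have hpm : prvI n 1 = 2*n+2 := by unfold prvI; split_ifs <;> omega
    rw [hpm] at hsum ⊢
    have hb3 : bwL n k l (2*n+2+1) = 0 := by unfold bwL; split_ifs <;> first | rfl | omega
    have hb1 : bwL n k l 1 = 0 := bwL_one n k l
    rw [hb1] at hsum
    rw [hb3]
    linarith [hsum]
theorem flux_const (n : ℕ) (hn : 1 ≤ n) (k l : ℕ → ℝ) (ρ : Fin (2*n+2) → ℝ)
    (hker : (Atilde n k l).mulVec ρ = 0) :
    ∀ m, 1 ≤ m → m ≤ 2*n+2 → FlX n k l (Pget n ρ) m = FlX n k l (Pget n ρ) 1 := by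
  intro m
  induction m with
  | zero => omega
  | succ t ih =>
    intro h1 h2
    rcases Nat.lt_or_ge t 1 with h | h
    · have ht : t = 0 := by omega
      subst ht; rfl
    · have hs := row_flux n hn k l ρ hker (t+1) (by omega) h2
      have hp : prvI n (t+1) = t := by unfold prvI; split_ifs <;> omega
      rw [hp] at hs
      rw [← hs]; exact ih h (by omega)

theorem X_mk (n : ℕ) (x : Fin (2*n+4) → ℝ) (p : ℕ) (h : p - 1 < 2*n+4) :
    X n x p = x ⟨p-1, h⟩ := dif_pos h

theorem fw_k (n : ℕ) (k l : ℕ → ℝ) (a : ℕ) (h1 : 1 ≤ a) (h2 : a ≤ n) :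
    fwL n k l a = k (2*a-1) := by unfold fwL; rw [if_pos ⟨h1, h2⟩]

theorem fw_mid (n : ℕ) (k l : ℕ → ℝ) : fwL n k l (n+1) = k (2*n+1) := by
  unfold fwL; rw [if_neg (by omega), if_pos rfl]

theorem fw_l (n : ℕ) (k l : ℕ → ℝ) (a : ℕ) (h1 : n+2 ≤ a) (h2 : a ≤ 2*n+1) :
    fwL n k l a = l (2*(2*n+2-a)+1) := by
  unfold fwL; rw [if_neg (by omega), if_neg (by omega), if_pos ⟨h1, h2⟩]

theorem fw_top (n : ℕ) (k l : ℕ → ℝ) : fwL n k l (2*n+2) = l 1 := by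
  unfold fwL; rw [if_neg (by omega), if_neg (by omega), if_neg (by omega), if_pos rfl]

theorem bw_k (n : ℕ) (k l : ℕ → ℝ) (a : ℕ) (h1 : 2 ≤ a) (h2 : a ≤ n+1) :
    bwL n k l a = k (2*(a-1)) := by unfold bwL; rw [if_pos ⟨h1, h2⟩]

theorem bw_l (n : ℕ) (k l : ℕ → ℝ) (a : ℕ) (h1 : n+3 ≤ a) (h2 : a ≤ 2*n+2) :
    bwL n k l a = l (2*(2*n+3-a)) := by
  unfold bwL; rw [if_neg (by omega), if_pos ⟨h1, h2⟩]

theorem bw_zero (n : ℕ) (k l : ℕ → ℝ) (a : ℕ) (h1 : ¬(2 ≤ a ∧ a ≤ n+1))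
    (h2 : ¬(n+3 ≤ a ∧ a ≤ 2*n+2)) : bwL n k l a = 0 := by
  unfold bwL; rw [if_neg h1, if_neg h2]

theorem Y_one (n : ℕ) (x : Fin (2*n+4) → ℝ) : Yx n x 1 = X n x 1 * X n x 3 := by
  unfold Yx; rw [if_pos rfl]

theorem Y_mid (n : ℕ) (x : Fin (2*n+4) → ℝ) (a : ℕ) (h1 : 2 ≤ a) (h2 : a ≤ n+1) :
    Yx n x a = X n x (2*a+1) := by
  unfold Yx; rw [if_neg (by omega), if_pos h2]

theorem Y_mid2 (n : ℕ) (x : Fin (2*n+4) → ℝ) (hn : 1 ≤ n) :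
    Yx n x (n+2) = X n x 2 * X n x 4 := by
  unfold Yx; rw [if_neg (by omega), if_neg (by omega), if_pos rfl]

theorem Y_hi (n : ℕ) (x : Fin (2*n+4) → ℝ) (a : ℕ) (h1 : n+3 ≤ a) (h2 : a ≤ 2*n+2) :
    Yx n x a = X n x (4*n+10-2*a) := by
  unfold Yx; rw [if_neg (by omega), if_neg (by omega), if_neg (by omega), if_pos h2]

theorem Y_out (n : ℕ) (x : Fin (2*n+4) → ℝ) (a : ℕ) (h1 : 2*n+2 < a) : Yx n x a = 0 := by
  unfold Yx; rw [if_neg (by omega), if_neg (by omega), if_neg (by omega), if_neg (by omega)]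

theorem Rflux (n : ℕ) (hn : 1 ≤ n) (k l : ℕ → ℝ) (x : Fin (2*n+4) → ℝ) :
    ∀ a, 1 ≤ a → a ≤ 2*n+2 →
      Pget n (Rvec n k l x) a = FlX n k l (Yx n x) a := by
  intro a h1 h2
  rw [Pget_mk n (Rvec n k l x) a (by omega)]
  have hcoe : ((⟨a-1, by omega⟩ : Fin (2*n+2)) : ℕ) + 1 = a := by simp; omega
  unfold Rvec FlX
  rw [hcoe]
  rcases Nat.lt_or_ge a 2 with hA | hA
  · have ha : a = 1 := by omega
    subst ha
    rw [if_pos rfl, fw_k n k l 1 le_rfl hn, Y_one,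
      bw_k n k l (1+1) (by omega) (by omega), Y_mid n x (1+1) (by omega) (by omega),
      show 2*1-1 = 1 by omega, show 2*(1+1-1) = 2 by omega, show 2*(1+1)+1 = 5 by omega]
    ring
  rcases Nat.lt_or_ge a (n+1) with hB | hB
  · rw [if_neg (by omega), if_pos (by omega : a ≤ n),
      fw_k n k l a (by omega) (by omega), Y_mid n x a (by omega) (by omega),
      bw_k n k l (a+1) (by omega) (by omega), Y_mid n x (a+1) (by omega) (by omega),
      show 2*(a-1)+1 = 2*a-1 by omega, show 2*(a-1)+3 = 2*a+1 by omega,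
      show 2*(a-1)+2 = 2*(a+1-1) by omega, show 2*(a-1)+5 = 2*(a+1)+1 by omega]
  rcases Nat.lt_or_ge a (n+2) with hC | hC
  · have ha : a = n+1 := by omega
    subst ha
    rw [if_neg (by omega), if_neg (by omega), if_pos rfl,
      fw_mid, Y_mid n x (n+1) (by omega) (by omega),
      bw_zero n k l (n+1+1) (by omega) (by omega),
      show 2*(n+1)+1 = 2*n+3 by omega]
    ring
  rcases Nat.lt_or_ge a (n+3) with hD | hD
  · have ha : a = n+2 := by omega
    subst ha
    rw [if_neg (by omega), if_neg (by omega), if_neg (by omega), if_pos rfl,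
      fw_l n k l (n+2) (by omega) (by omega), Y_mid2 n x hn,
      bw_l n k l (n+2+1) (by omega) (by omega), Y_hi n x (n+2+1) (by omega) (by omega),
      show 2*(2*n+2-(n+2))+1 = 2*n+1 by omega,
      show 2*(2*n+3-(n+2+1)) = 2*n by omega,
      show 4*n+10-2*(n+2+1) = 2*n+4 by omega]
    ring
  rcases Nat.lt_or_ge a (2*n+2) with hE | hE
  · rw [if_neg (by omega), if_neg (by omega), if_neg (by omega), if_neg (by omega),
      if_pos (by omega : a ≤ 2*n+1),
      fw_l n k l a (by omega) (by omega), Y_hi n x a (by omega) (by omega),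
      bw_l n k l (a+1) (by omega) (by omega), Y_hi n x (a+1) (by omega) (by omega),
      show 2*(n-(a-(n+2)))+1 = 2*(2*n+2-a)+1 by omega,
      show 2*(n-(a-(n+2)))+6 = 4*n+10-2*a by omega,
      show 2*(n-(a-(n+2)))+4 = 4*n+10-2*(a+1) by omega,
      show 2*(n-(a-(n+2))) = 2*(2*n+3-(a+1)) by omega]
  · have ha : a = 2*n+2 := by omega
    subst ha
    rw [if_neg (by omega), if_neg (by omega), if_neg (by omega), if_neg (by omega),
      if_neg (by omega),
      fw_top, Y_hi n x (2*n+2) (by omega) le_rfl,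
      bw_zero n k l (2*n+2+1) (by omega) (by omega),
      show 4*n+10-2*(2*n+2) = 6 by omega]
    ring
theorem Pidx_bounds (n : ℕ) (hn : 1 ≤ n) (m : ℕ) (h1 : 1 ≤ m) (h2 : m ≤ 2*n+4) :
    1 ≤ Pidx n m ∧ Pidx n m ≤ 2*n+2 := by
  unfold Pidx; split_ifs <;> omega

theorem Qidx_bounds (n : ℕ) (hn : 1 ≤ n) (m : ℕ) (h1 : 1 ≤ m) (h2 : m ≤ 2*n+4) :
    1 ≤ Qidx n m ∧ Qidx n m ≤ 2*n+2 := by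
  unfold Qidx; split_ifs <;> omega

set_option maxHeartbeats 3000000 in
theorem gamma_apply (n : ℕ) (hn : 1 ≤ n) (r : Fin (2*n+4)) (c : Fin (2*n+2)) :
    Gamma n r c = (if (c:ℕ)+1 = Pidx n ((r:ℕ)+1) then 1 else 0)
      - (if (c:ℕ)+1 = Qidx n ((r:ℕ)+1) then 1 else 0) := by
  have hr : (r:ℕ) < 2*n+4 := r.isLt
  have hc : (c:ℕ) < 2*n+2 := c.isLt
  unfold Gamma Pidx Qidx E
  rw [Matrix.of_apply]
  simp only [Pi.sub_apply, Pi.add_apply]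
  split_ifs <;> try omega
  all_goals try norm_num
  all_goals try omega
  all_goals (split_ifs <;> first | omega | norm_num)
  all_goals (simp only [Fin.ext_iff, Fin.val_zero] at *; omega)
theorem gamma_mulVec (n : ℕ) (hn : 1 ≤ n) (v : Fin (2*n+2) → ℝ) (r : Fin (2*n+4)) :
    (Gamma n).mulVec v r = Pget n v (Pidx n ((r:ℕ)+1)) - Pget n v (Qidx n ((r:ℕ)+1)) := by
  have hm1 : 1 ≤ (r:ℕ)+1 := by omega
  have hm2 : (r:ℕ)+1 ≤ 2*n+4 := by have := r.isLt; omega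
  obtain ⟨hP1, hP2⟩ := Pidx_bounds n hn ((r:ℕ)+1) hm1 hm2
  obtain ⟨hQ1, hQ2⟩ := Qidx_bounds n hn ((r:ℕ)+1) hm1 hm2
  rw [Matrix.mulVec, dotProduct]
  have : ∀ c : Fin (2*n+2), Gamma n r c * v c =
      (if (c:ℕ)+1 = Pidx n ((r:ℕ)+1) then v c else 0)
        - (if (c:ℕ)+1 = Qidx n ((r:ℕ)+1) then v c else 0) := by
    intro c
    rw [gamma_apply n hn r c]
    rw [sub_mul, ite_mul, ite_mul, one_mul, zero_mul]
  rw [Finset.sum_congr rfl (fun c _ => this c), Finset.sum_sub_distrib,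
    sum_pick v (Pidx n ((r:ℕ)+1)) hP1 hP2, sum_pick v (Qidx n ((r:ℕ)+1)) hQ1 hQ2,
    Pget_mk n v (Pidx n ((r:ℕ)+1)) (by omega), Pget_mk n v (Qidx n ((r:ℕ)+1)) (by omega)]

theorem Pidx_odd (n : ℕ) (hn : 1 ≤ n) (i : ℕ) (h1 : 1 ≤ i) (h2 : i ≤ n) :
    Pidx n (2*i+3) = i := by unfold Pidx; split_ifs <;> omega

theorem Qidx_odd (n : ℕ) (hn : 1 ≤ n) (i : ℕ) (h1 : 1 ≤ i) (h2 : i ≤ n) :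
    Qidx n (2*i+3) = i+1 := by unfold Qidx; split_ifs <;> omega

theorem Pidx_even (n : ℕ) (hn : 1 ≤ n) (j : ℕ) (h1 : 1 ≤ j) (h2 : j ≤ n) :
    Pidx n (2*j+4) = 2*n+2-j := by unfold Pidx; split_ifs <;> omega

theorem Qidx_even (n : ℕ) (hn : 1 ≤ n) (j : ℕ) (h1 : 1 ≤ j) (h2 : j ≤ n) :
    Qidx n (2*j+4) = 2*n+3-j := by unfold Qidx; split_ifs <;> omega

theorem Pidx_three (n : ℕ) : Pidx n 3 = 2*n+2 := by unfold Pidx; norm_num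

theorem Qidx_three (n : ℕ) : Qidx n 3 = 1 := by unfold Qidx; norm_num

theorem steady_iff (n : ℕ) (hn : 1 ≤ n) (v : Fin (2*n+2) → ℝ) :
    (Gamma n).mulVec v = 0 ↔ (∀ a, 1 ≤ a → a ≤ 2*n+2 → Pget n v a = Pget n v 1) := by
  constructor
  · intro h
    have hrow : ∀ m, 1 ≤ m → m ≤ 2*n+4 → Pget n v (Pidx n m) = Pget n v (Qidx n m) := by
      intro m h1 h2
      have hlt : m - 1 < 2*n+4 := by omega
      have h0 : (Gamma n).mulVec v ⟨m-1, hlt⟩ = 0 := by rw [h]; rfl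
      rw [gamma_mulVec n hn v ⟨m-1, hlt⟩] at h0
      have hco : ((⟨m-1, hlt⟩ : Fin (2*n+4)) : ℕ) + 1 = m := by simp; omega
      rw [hco] at h0
      linarith
    have E1 : ∀ i, 1 ≤ i → i ≤ n → Pget n v i = Pget n v (i+1) := by
      intro i hi1 hi2
      have := hrow (2*i+3) (by omega) (by omega)
      rwa [Pidx_odd n hn i hi1 hi2, Qidx_odd n hn i hi1 hi2] at this
    have E2 : ∀ j, 1 ≤ j → j ≤ n → Pget n v (2*n+2-j) = Pget n v (2*n+3-j) := by
      intro j hj1 hj2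
      have := hrow (2*j+4) (by omega) (by omega)
      rwa [Pidx_even n hn j hj1 hj2, Qidx_even n hn j hj1 hj2] at this
    have E3 : Pget n v (2*n+2) = Pget n v 1 := by
      have := hrow 3 (by omega) (by omega)
      rwa [Pidx_three, Qidx_three] at this
    have A : ∀ i, i ≤ n → Pget n v (i+1) = Pget n v 1 := by
      intro i
      induction i with
      | zero => intro _; rfl
      | succ t ih =>
        intro h'
        rw [← E1 (t+1) (by omega) h']
        exact ih (by omega)
    have B : ∀ j, j ≤ n → Pget n v (2*n+2-j) = Pget n v (2*n+2) := by
      intro j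
      induction j with
      | zero => intro _; rfl
      | succ t ih =>
        intro h'
        have e := E2 (t+1) (by omega) h'
        rw [show 2*n+3-(t+1) = 2*n+2-t by omega] at e
        rw [e]
        exact ih (by omega)
    intro a h1 h2
    rcases Nat.lt_or_ge a (n+2) with hA | hA
    · have := A (a-1) (by omega)
      rwa [show a-1+1 = a by omega] at this
    · have := B (2*n+2-a) (by omega)
      rw [show 2*n+2-(2*n+2-a) = a by omega] at this
      rw [this, E3]
  · intro h
    funext r
    rw [gamma_mulVec n hn v r]
    have hm1 : 1 ≤ (r:ℕ)+1 := by omega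
    have hm2 : (r:ℕ)+1 ≤ 2*n+4 := by have := r.isLt; omega
    obtain ⟨hP1, hP2⟩ := Pidx_bounds n hn ((r:ℕ)+1) hm1 hm2
    obtain ⟨hQ1, hQ2⟩ := Qidx_bounds n hn ((r:ℕ)+1) hm1 hm2
    rw [h _ hP1 hP2, h _ hQ1 hQ2]
    simp
theorem Pget_pos (n : ℕ) (ρ : Fin (2*n+2) → ℝ) (hρ : ∀ i, 0 < ρ i) (a : ℕ)
    (h : a - 1 < 2*n+2) : 0 < Pget n ρ a := by
  rw [Pget_mk n ρ a h]; exact hρ _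

theorem X_pos (n : ℕ) (x : Fin (2*n+4) → ℝ) (hx : ∀ i, 0 < x i) (m : ℕ)
    (h : m - 1 < 2*n+4) : 0 < X n x m := by
  rw [X_mk n x m h]; exact hx _

theorem X_coord (n : ℕ) (w : Fin (2*n+4) → ℝ) (r : Fin (2*n+4)) :
    w r = X n w ((r:ℕ)+1) := by
  have h : ((r:ℕ)+1) - 1 < 2*n+4 := by have := r.isLt; omega
  rw [X_mk n w ((r:ℕ)+1) h]
  have e : (⟨(r:ℕ)+1-1, h⟩ : Fin (2*n+4)) = r := Fin.ext (by simp)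
  rw [e]

theorem chi_eval (n : ℕ) (ρ : Fin (2*n+2) → ℝ) (x2 x3 x6 : ℝ) (m : ℕ)
    (h1 : 1 ≤ m) (h2 : m ≤ 2*n+4) :
    X n (chi n ρ x2 x3 x6) m =
      (if m = 1 then (Pget n ρ 1 / Pget n ρ (2*n+2)) * (x6 / x3)
       else if m = 2 then x2
       else if m = 3 then x3
       else if m = 4 then (Pget n ρ (n+2) / Pget n ρ (2*n+2)) * (x6 / x2)
       else if m = 6 then x6
       else if m % 2 = 1 then (Pget n ρ ((m-3)/2 + 1) / Pget n ρ (2*n+2)) * x6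
       else (Pget n ρ (2*n+2 - (m-6)/2) / Pget n ρ (2*n+2)) * x6) := by
  rw [X_mk n _ m (by omega)]
  have hco : ((⟨m-1, by omega⟩ : Fin (2*n+4)) : ℕ) + 1 = m := by simp; omega
  unfold chi
  rw [hco]

theorem Y_chi (n : ℕ) (hn : 1 ≤ n) (ρ : Fin (2*n+2) → ℝ) (x2 x3 x6 : ℝ)
    (h2 : x2 ≠ 0) (h3 : x3 ≠ 0) (hρtop : Pget n ρ (2*n+2) ≠ 0) :
    ∀ a, 1 ≤ a → a ≤ 2*n+2 →
      Yx n (chi n ρ x2 x3 x6) a = (x6 / Pget n ρ (2*n+2)) * Pget n ρ a := by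
  intro a h1' h2'
  rcases Nat.lt_or_ge a 2 with hA | hA
  · have ha : a = 1 := by omega
    subst ha
    rw [Y_one, chi_eval n ρ x2 x3 x6 1 (by omega) (by omega),
      chi_eval n ρ x2 x3 x6 3 (by omega) (by omega)]
    rw [if_pos rfl, if_neg (by omega), if_neg (by omega), if_pos rfl]
    field_simp
  rcases Nat.lt_or_ge a (n+2) with hB | hB
  · rw [Y_mid n _ a (by omega) (by omega),
      chi_eval n ρ x2 x3 x6 (2*a+1) (by omega) (by omega)]
    rw [if_neg (by omega), if_neg (by omega), if_neg (by omega), if_neg (by omega),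
      if_neg (by omega), if_pos (by omega : (2*a+1) % 2 = 1),
      show (2*a+1-3)/2+1 = a by omega]
    ring
  rcases Nat.lt_or_ge a (n+3) with hC | hC
  · have ha : a = n+2 := by omega
    subst ha
    rw [Y_mid2 n _ hn, chi_eval n ρ x2 x3 x6 2 (by omega) (by omega),
      chi_eval n ρ x2 x3 x6 4 (by omega) (by omega)]
    rw [if_neg (by omega), if_pos rfl, if_neg (by omega), if_neg (by omega),
      if_neg (by omega), if_pos rfl]
    field_simp
  rcases Nat.lt_or_ge a (2*n+2) with hD | hD
  · rw [Y_hi n _ a (by omega) (by omega),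
      chi_eval n ρ x2 x3 x6 (4*n+10-2*a) (by omega) (by omega)]
    rw [if_neg (by omega), if_neg (by omega), if_neg (by omega), if_neg (by omega),
      if_neg (by omega), if_neg (by omega : ¬((4*n+10-2*a) % 2 = 1)),
      show 2*n+2-((4*n+10-2*a)-6)/2 = a by omega]
    ring
  · have ha : a = 2*n+2 := by omega
    subst ha
    rw [Y_hi n _ (2*n+2) (by omega) le_rfl, show 4*n+10-2*(2*n+2) = 6 by omega,
      chi_eval n ρ x2 x3 x6 6 (by omega) (by omega)]
    rw [if_neg (by omega), if_neg (by omega), if_neg (by omega), if_neg (by omega),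
      if_pos rfl]
    field_simp

theorem eq_of_Y (n : ℕ) (hn : 1 ≤ n) (x z : Fin (2*n+4) → ℝ)
    (h2 : X n z 2 = X n x 2) (h3 : X n z 3 = X n x 3)
    (hx2 : X n x 2 ≠ 0) (hx3 : X n x 3 ≠ 0)
    (hY : ∀ a, 1 ≤ a → a ≤ 2*n+2 → Yx n z a = Yx n x a) : z = x := by
  funext r
  rw [X_coord n z r, X_coord n x r]
  have hr : (r:ℕ) < 2*n+4 := r.isLt
  have hm1 : 1 ≤ (r:ℕ)+1 := by omega
  have hm2 : (r:ℕ)+1 ≤ 2*n+4 := by omega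
  generalize hg : (r:ℕ)+1 = m at hm1 hm2 ⊢
  by_cases hc1 : m = 1
  · subst hc1
    have h := hY 1 (by omega) (by omega)
    rw [Y_one, Y_one, h3] at h
    exact mul_right_cancel₀ hx3 h
  by_cases hc2 : m = 2
  · rw [hc2]; exact h2
  by_cases hc3 : m = 3
  · rw [hc3]; exact h3
  by_cases hc4 : m = 4
  · have h := hY (n+2) (by omega) (by omega)
    rw [Y_mid2 n _ hn, Y_mid2 n _ hn, h2] at h
    rw [hc4]
    exact mul_left_cancel₀ hx2 h
  by_cases hodd : m % 2 = 1
  · have h := hY ((m-1)/2) (by omega) (by omega)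
    rw [Y_mid n _ ((m-1)/2) (by omega) (by omega),
      Y_mid n _ ((m-1)/2) (by omega) (by omega),
      show 2*((m-1)/2)+1 = m by omega] at h
    exact h
  · have h := hY (2*n+5-m/2) (by omega) (by omega)
    rw [Y_hi n _ (2*n+5-m/2) (by omega) (by omega),
      Y_hi n _ (2*n+5-m/2) (by omega) (by omega),
      show 4*n+10-2*(2*n+5-m/2) = m by omega] at h
    exact h

theorem chi_pos (n : ℕ) (hn : 1 ≤ n) (ρ : Fin (2*n+2) → ℝ) (hρ : ∀ i, 0 < ρ i)
    (x2 x3 x6 : ℝ) (h2 : 0 < x2) (h3 : 0 < x3) (h6 : 0 < x6) :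
    ∀ i, 0 < chi n ρ x2 x3 x6 i := by
  intro r
  rw [X_coord n (chi n ρ x2 x3 x6) r]
  have hr : (r:ℕ) < 2*n+4 := r.isLt
  rw [chi_eval n ρ x2 x3 x6 ((r:ℕ)+1) (by omega) (by omega)]
  have hP : ∀ a : ℕ, a - 1 < 2*n+2 → 0 < Pget n ρ a := Pget_pos n ρ hρ
  split_ifs with g1 g2 g3 g4 g5 g6
  · exact mul_pos (div_pos (hP 1 (by omega)) (hP (2*n+2) (by omega))) (div_pos h6 h3)
  · exact h2
  · exact h3
  · exact mul_pos (div_pos (hP (n+2) (by omega)) (hP (2*n+2) (by omega))) (div_pos h6 h2)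
  · exact h6
  · exact mul_pos (div_pos (hP _ (by omega)) (hP (2*n+2) (by omega))) h6
  · exact mul_pos (div_pos (hP _ (by omega)) (hP (2*n+2) (by omega))) h6
end ProcAux

/-- The set of positive steady states of the processive `n`-site phosphorylation system
equals the image of the map `χ` on positive inputs. -/
theorem positive_steady_states_eq_image_chi (n : ℕ) (hn : 1 ≤ n) (k l : ℕ → ℝ)
    (hk : ∀ i, 1 ≤ i → i ≤ 2*n+1 → 0 < k i)
    (hl : ∀ i, 1 ≤ i → i ≤ 2*n+1 → 0 < l i)
    (ρ : Fin (2*n+2) → ℝ) (hρ : ∀ i, 0 < ρ i)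
    (hker : (Atilde n k l).mulVec ρ = 0) :
    {x : Fin (2*n+4) → ℝ | (∀ i, 0 < x i) ∧ (Gamma n).mulVec (Rvec n k l x) = 0} =
    {x : Fin (2*n+4) → ℝ |
      ∃ x2 x3 x6 : ℝ, 0 < x2 ∧ 0 < x3 ∧ 0 < x6 ∧ x = chi n ρ x2 x3 x6} := by
  have hρtop : 0 < Pget n ρ (2*n+2) := ProcAux.Pget_pos n ρ hρ (2*n+2) (by omega)
  have hρne : Pget n ρ (2*n+2) ≠ 0 := ne_of_gt hρtop
  ext x
  simp only [Set.mem_setOf_eq]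
  constructor
  · rintro ⟨hpos, hst⟩
    have hx2 : 0 < X n x 2 := ProcAux.X_pos n x hpos 2 (by omega)
    have hx3 : 0 < X n x 3 := ProcAux.X_pos n x hpos 3 (by omega)
    have hx6 : 0 < X n x 6 := ProcAux.X_pos n x hpos 6 (by omega)
    refine ⟨X n x 2, X n x 3, X n x 6, hx2, hx3, hx6, ?_⟩
    have hVall := (ProcAux.steady_iff n hn (Rvec n k l x)).mp hst
    have hFY : ∀ a, 1 ≤ a → a ≤ 2*n+2 → ProcAux.FlX n k l (ProcAux.Yx n x) a
        = ProcAux.FlX n k l (ProcAux.Yx n x) 1 := by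
      intro a h1 h2
      rw [← ProcAux.Rflux n hn k l x a h1 h2,
        ← ProcAux.Rflux n hn k l x 1 (by omega) (by omega)]
      exact hVall a h1 h2
    have hFρ := ProcAux.flux_const n hn k l ρ hker
    set d : ℕ → ℝ :=
      fun a => ProcAux.Yx n x a - (X n x 6 / Pget n ρ (2*n+2)) * Pget n ρ a with hd
    have hFd : ∀ a, ProcAux.FlX n k l d a
        = ProcAux.FlX n k l (ProcAux.Yx n x) a
          - (X n x 6 / Pget n ρ (2*n+2)) * ProcAux.FlX n k l (Pget n ρ) a := by
      intro a
      unfold ProcAux.FlX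
      simp only [hd]
      ring
    have hdtop : d (2*n+2) = 0 := by
      simp only [hd]
      rw [ProcAux.Y_hi n x (2*n+2) (by omega) le_rfl, show 4*n+10-2*(2*n+2) = 6 by omega]
      field_simp
      ring
    have hFdtop : ProcAux.FlX n k l d (2*n+2) = 0 := by
      unfold ProcAux.FlX
      rw [hdtop, ProcAux.bw_zero n k l (2*n+2+1) (by omega) (by omega)]
      ring
    have hFd0 : ∀ a, 1 ≤ a → a ≤ 2*n+2 → ProcAux.FlX n k l d a = 0 := by
      intro a h1 h2
      rw [hFd, hFY a h1 h2, hFρ a h1 h2,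
        ← hFY (2*n+2) (by omega) le_rfl, ← hFρ (2*n+2) (by omega) le_rfl, ← hFd]
      exact hFdtop
    have hdn1 : d (n+1) = 0 := by
      have h0 := hFd0 (n+1) (by omega) (by omega)
      unfold ProcAux.FlX at h0
      rw [ProcAux.fw_mid, ProcAux.bw_zero n k l (n+1+1) (by omega) (by omega),
        zero_mul, sub_zero] at h0
      exact (mul_eq_zero.mp h0).resolve_left (ne_of_gt (hk (2*n+1) (by omega) (by omega)))
    have hdk : ∀ t, t ≤ n → d (n+1-t) = 0 := by
      intro t
      induction t with
      | zero => intro _; exact hdn1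
      | succ s ih =>
        intro hs
        have h0 := hFd0 (n-s) (by omega) (by omega)
        unfold ProcAux.FlX at h0
        rw [ProcAux.fw_k n k l (n-s) (by omega) (by omega),
          ProcAux.bw_k n k l (n-s+1) (by omega) (by omega)] at h0
        have hnext : d (n-s+1) = 0 := by
          rw [show n-s+1 = n+1-s by omega]; exact ih (by omega)
        rw [hnext, mul_zero, sub_zero] at h0
        have hz := (mul_eq_zero.mp h0).resolve_left
          (ne_of_gt (hk (2*(n-s)-1) (by omega) (by omega)))
        rw [show n+1-(s+1) = n-s by omega]
        exact hz
    have hdh : ∀ t, t ≤ n → d (2*n+2-t) = 0 := by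
      intro t
      induction t with
      | zero => intro _; exact hdtop
      | succ s ih =>
        intro hs
        have h0 := hFd0 (2*n+1-s) (by omega) (by omega)
        unfold ProcAux.FlX at h0
        rw [ProcAux.fw_l n k l (2*n+1-s) (by omega) (by omega)] at h0
        have hnext : d (2*n+1-s+1) = 0 := by
          rw [show 2*n+1-s+1 = 2*n+2-s by omega]; exact ih (by omega)
        rw [hnext, mul_zero, sub_zero] at h0
        have hz := (mul_eq_zero.mp h0).resolve_left
          (ne_of_gt (hl (2*(2*n+2-(2*n+1-s))+1) (by omega) (by omega)))
        rw [show 2*n+2-(s+1) = 2*n+1-s by omega]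
        exact hz
    have hdall : ∀ a, 1 ≤ a → a ≤ 2*n+2 →
        ProcAux.Yx n x a = (X n x 6 / Pget n ρ (2*n+2)) * Pget n ρ a := by
      intro a h1 h2
      have h0 : d a = 0 := by
        rcases Nat.lt_or_ge a (n+2) with hA | hA
        · have := hdk (n+1-a) (by omega)
          rwa [show n+1-(n+1-a) = a by omega] at this
        · have := hdh (2*n+2-a) (by omega)
          rwa [show 2*n+2-(2*n+2-a) = a by omega] at this
      simp only [hd] at h0
      linarith
    have hchi2 : X n (chi n ρ (X n x 2) (X n x 3) (X n x 6)) 2 = X n x 2 := by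
      rw [ProcAux.chi_eval n ρ _ _ _ 2 (by omega) (by omega)]
      rw [if_neg (by omega), if_pos rfl]
    have hchi3 : X n (chi n ρ (X n x 2) (X n x 3) (X n x 6)) 3 = X n x 3 := by
      rw [ProcAux.chi_eval n ρ _ _ _ 3 (by omega) (by omega)]
      rw [if_neg (by omega), if_neg (by omega), if_pos rfl]
    have hYeq : ∀ a, 1 ≤ a → a ≤ 2*n+2 →
        ProcAux.Yx n (chi n ρ (X n x 2) (X n x 3) (X n x 6)) a = ProcAux.Yx n x a := by
      intro a h1 h2
      rw [ProcAux.Y_chi n hn ρ _ _ _ (ne_of_gt hx2) (ne_of_gt hx3) hρne a h1 h2,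
        hdall a h1 h2]
    exact (ProcAux.eq_of_Y n hn x _ hchi2 hchi3 (ne_of_gt hx2) (ne_of_gt hx3) hYeq).symm
  · rintro ⟨x2, x3, x6, h2, h3, h6, rfl⟩
    refine ⟨ProcAux.chi_pos n hn ρ hρ x2 x3 x6 h2 h3 h6, ?_⟩
    rw [ProcAux.steady_iff n hn]
    have hYa : ∀ b, 1 ≤ b → b ≤ 2*n+3 → ProcAux.Yx n (chi n ρ x2 x3 x6) b
        = (x6 / Pget n ρ (2*n+2)) * Pget n ρ b := by
      intro b hb1 hb2
      rcases Nat.lt_or_ge b (2*n+3) with hb | hb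
      · exact ProcAux.Y_chi n hn ρ x2 x3 x6 (ne_of_gt h2) (ne_of_gt h3) hρne b hb1 (by omega)
      · have hb' : b = 2*n+3 := by omega
        subst hb'
        rw [ProcAux.Y_out n _ (2*n+3) (by omega), ProcAux.Pget_out n ρ]
        ring
    have hFl : ∀ b, 1 ≤ b → b ≤ 2*n+2 →
        ProcAux.FlX n k l (ProcAux.Yx n (chi n ρ x2 x3 x6)) b
          = (x6 / Pget n ρ (2*n+2)) * ProcAux.FlX n k l (Pget n ρ) b := by
      intro b hb1 hb2
      unfold ProcAux.FlX
      rw [hYa b hb1 (by omega), hYa (b+1) (by omega) (by omega)]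
      ring
    intro a h1' h2'
    rw [ProcAux.Rflux n hn k l _ a h1' h2', ProcAux.Rflux n hn k l _ 1 (by omega) (by omega),
      hFl a h1' h2', hFl 1 (by omega) (by omega),
      ProcAux.flux_const n hn k l ρ hker a h1' h2']

end
end

section
/- Suppose a ∈ ℝ^{2n+4} has all coordinates strictly positive and is a steady state (Γ·R(a) = 0). Then a vector b ∈ ℝ^{2n+4} with all coordinates strictly positive is a steady state if and only if the vector (ln b₁ − ln a₁, …, ln b_{2n+4} − ln a_{2n+4}) lies in the column space of the matrix B. -/
open Matrix Finset

noncomputable section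

/-- The `(2n+4) × 3` matrix `B` whose columns are `e₂ - e₄`, `e₃ - e₁` and
`e₁ + e₄ + e₅ + ⋯ + e_{2n+4}` (rows indexed 1-based). -/
def Bmat (n : ℕ) : Matrix (Fin (2*n+4)) (Fin 3) ℝ :=
  Matrix.of fun r c =>
    let m := (r : ℕ) + 1
    if (c : ℕ) = 0 then (if m = 2 then (1:ℝ) else if m = 4 then -1 else 0)
    else if (c : ℕ) = 1 then (if m = 3 then 1 else if m = 1 then -1 else 0)
    else (if m = 2 ∨ m = 3 then 0 else 1)

lemma sum_if_val {N : ℕ} (p : ℕ) (h : p < N) (f : Fin N → ℝ) :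
    ∑ c : Fin N, (if (c:ℕ) = p then f c else 0) = f ⟨p, h⟩ := by
  rw [Finset.sum_eq_single (⟨p, h⟩ : Fin N)]
  · simp
  · intro c _ hc
    rw [if_neg]
    simpa [Fin.ext_iff] using hc
  · simp

lemma X_mk (n m : ℕ) (x : Fin (2*n+4) → ℝ) (h1 : 1 ≤ m) (h2 : m ≤ 2*n+4) :
    X n x m = x ⟨m-1, by omega⟩ := by
  unfold X
  rw [dif_pos (show m - 1 < 2*n+4 by omega)]

lemma X_pos (n m : ℕ) (x : Fin (2*n+4) → ℝ) (hx : ∀ i, 0 < x i)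
    (h1 : 1 ≤ m) (h2 : m ≤ 2*n+4) : 0 < X n x m := by
  rw [X_mk n m x h1 h2]; exact hx _

lemma X_succ (n : ℕ) (x : Fin (2*n+4) → ℝ) (i : Fin (2*n+4)) :
    X n x ((i:ℕ)+1) = x i := by
  unfold X
  rw [dif_pos (show (i:ℕ)+1-1 < 2*n+4 by omega)]
  congr 1

set_option maxHeartbeats 1600000 in
lemma gamma_step (n : ℕ) (hn : 1 ≤ n) (v : Fin (2*n+2) → ℝ)
    (hv : (Gamma n).mulVec v = 0) (p : ℕ) (hp : p+1 < 2*n+2) :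
    v ⟨p, by omega⟩ = v ⟨p+1, hp⟩ := by
  have key : ∀ (r : Fin (2*n+4)),
      (∀ c0 : Fin (2*n+2), Gamma n r c0 * v c0 =
        (if (c0:ℕ) = p then v c0 else 0) - (if (c0:ℕ) = p+1 then v c0 else 0)) →
      v ⟨p, by omega⟩ = v ⟨p+1, hp⟩ := by
    intro r hr
    have h0 : ∑ c0, Gamma n r c0 * v c0 = 0 := by
      have := congrFun hv r
      simpa [Matrix.mulVec, dotProduct] using this
    rw [Finset.sum_congr rfl (fun c0 _ => hr c0), Finset.sum_sub_distrib,
        sum_if_val p (by omega) v, sum_if_val (p+1) (by omega) v] at h0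
    linarith
  by_cases h1 : p + 1 ≤ n
  · apply key ⟨2*p+4, by omega⟩
    intro c0
    have hc := c0.isLt
    simp only [Gamma, Matrix.of_apply, E, Pi.add_apply, Pi.sub_apply, ite_apply]
    split_ifs <;> first | ring1 | (exfalso; omega)
  · by_cases h2 : p = n
    · apply key ⟨3, by omega⟩
      intro c0
      have hc := c0.isLt
      simp only [Gamma, Matrix.of_apply, E, Pi.add_apply, Pi.sub_apply, ite_apply]
      split_ifs <;> first | ring1 | (exfalso; omega)
    · apply key ⟨4*n-2*p+5, by omega⟩
      intro c0
      have hc := c0.isLt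
      simp only [Gamma, Matrix.of_apply, E, Pi.add_apply, Pi.sub_apply, ite_apply]
      split_ifs <;> first | ring1 | (exfalso; omega)

lemma hE1 (n : ℕ) (k l : ℕ → ℝ) (x : Fin (2*n+4) → ℝ) :
    Rvec n k l x ⟨0, by omega⟩ = k 1 * X n x 1 * X n x 3 - k 2 * X n x 5 := by
  simp only [Rvec]
  norm_num

lemma hE2 (n : ℕ) (k l : ℕ → ℝ) (x : Fin (2*n+4) → ℝ) (i : ℕ)
    (h1 : 1 ≤ i) (h2 : i + 1 ≤ n) :
    Rvec n k l x ⟨i, by omega⟩ =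
      k (2*i+1) * X n x (2*i+3) - k (2*i+2) * X n x (2*i+5) := by
  simp only [Rvec]
  rw [if_neg (by omega), if_pos h2]
  simp only [Nat.add_sub_cancel]

lemma hE3 (n : ℕ) (hn : 1 ≤ n) (k l : ℕ → ℝ) (x : Fin (2*n+4) → ℝ) :
    Rvec n k l x ⟨n, by omega⟩ = k (2*n+1) * X n x (2*n+3) := by
  simp only [Rvec]
  rw [if_neg (by omega), if_neg (by omega)]
  simp

lemma hE4 (n : ℕ) (k l : ℕ → ℝ) (x : Fin (2*n+4) → ℝ) :
    Rvec n k l x ⟨n+1, by omega⟩ =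
      l (2*n+1) * X n x 2 * X n x 4 - l (2*n) * X n x (2*n+4) := by
  simp only [Rvec]
  rw [if_neg (by omega), if_neg (by omega), if_neg (by omega)]
  simp

lemma hE5 (n : ℕ) (k l : ℕ → ℝ) (x : Fin (2*n+4) → ℝ) (i : ℕ)
    (h1 : 1 ≤ i) (h2 : i + 1 ≤ n) :
    Rvec n k l x ⟨n+1+i, by omega⟩ =
      l (2*(n-i)+1) * X n x (2*(n-i)+6) - l (2*(n-i)) * X n x (2*(n-i)+4) := by
  simp only [Rvec]
  rw [if_neg (by omega), if_neg (by omega), if_neg (by omega), if_neg (by omega),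
      if_pos (by omega)]
  rw [show n+1+i+1-(n+2) = i from by omega]

lemma hE6 (n : ℕ) (hn : 1 ≤ n) (k l : ℕ → ℝ) (x : Fin (2*n+4) → ℝ) :
    Rvec n k l x ⟨2*n+1, by omega⟩ = l 1 * X n x 6 := by
  simp only [Rvec]
  rw [if_neg (by omega), if_neg (by omega), if_neg (by omega), if_neg (by omega),
      if_neg (by omega)]

lemma rvec_const (n : ℕ) (hn : 1 ≤ n) (k l : ℕ → ℝ) (x : Fin (2*n+4) → ℝ)
    (hss : (Gamma n).mulVec (Rvec n k l x) = 0) :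
    ∀ c : Fin (2*n+2), Rvec n k l x c = k (2*n+1) * X n x (2*n+3) := by
  have step := gamma_step n hn (Rvec n k l x) hss
  have chain : ∀ q (h : q < 2*n+2), Rvec n k l x ⟨q, h⟩ = Rvec n k l x ⟨0, by omega⟩ := by
    intro q
    induction q with
    | zero => intro h; rfl
    | succ q ih =>
      intro h
      rw [← step q h]
      exact ih (by omega)
  intro c
  have h1 : Rvec n k l x c = Rvec n k l x ⟨0, by omega⟩ := by
    have := chain c.val c.isLt
    simpa using this
  have h2 := chain n (by omega)
  rw [h1, ← h2, hE3 n hn k l x]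

lemma mulVec_B (n : ℕ) (y : Fin 3 → ℝ) (i : Fin (2*n+4)) :
    (Bmat n).mulVec y i = Bmat n i 0 * y 0 + Bmat n i 1 * y 1 + Bmat n i 2 * y 2 := by
  simp [Matrix.mulVec, dotProduct, Fin.sum_univ_three]

lemma Bmat_row (n : ℕ) (i : Fin (2*n+4)) (r s t : ℝ) :
    Bmat n i 0 * r + Bmat n i 1 * s + Bmat n i 2 * t =
      if (i:ℕ) = 0 then t - s else if (i:ℕ) = 1 then r else if (i:ℕ) = 2 then s
      else if (i:ℕ) = 3 then t - r else t := by
  have hlt := i.isLt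
  simp only [Bmat, Matrix.of_apply, Fin.val_zero, Fin.val_one, Fin.val_two]
  norm_num
  simp only [← Fin.val_eq_zero_iff]
  split_ifs <;> first | ring1 | (exfalso; omega)

set_option maxHeartbeats 1600000 in
/-- If `a` is a positive steady state, then a positive `b` is a steady state if and only
if `ln b - ln a` lies in the column space of the matrix `B`. -/
theorem steady_state_iff_log_difference (n : ℕ) (hn : 1 ≤ n) (k l : ℕ → ℝ)
    (hk : ∀ i, 1 ≤ i → i ≤ 2*n+1 → 0 < k i)
    (hl : ∀ i, 1 ≤ i → i ≤ 2*n+1 → 0 < l i)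
    (a : Fin (2*n+4) → ℝ) (ha : ∀ i, 0 < a i)
    (hass : (Gamma n).mulVec (Rvec n k l a) = 0)
    (b : Fin (2*n+4) → ℝ) (hb : ∀ i, 0 < b i) :
    (Gamma n).mulVec (Rvec n k l b) = 0 ↔
      (fun i => Real.log (b i) - Real.log (a i)) ∈
        LinearMap.range (Matrix.mulVecLin (Bmat n)) := by
  constructor
  · intro hbss
    have hconst_a := rvec_const n hn k l a hass
    have hconst_b := rvec_const n hn k l b hbss
    set ca := k (2*n+1) * X n a (2*n+3) with hca
    set cb := k (2*n+1) * X n b (2*n+3) with hcb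
    have hkpos := hk (2*n+1) (by omega) (by omega)
    have ca_pos : 0 < ca := mul_pos hkpos (X_pos n (2*n+3) a ha (by omega) (by omega))
    have cb_pos : 0 < cb := mul_pos hkpos (X_pos n (2*n+3) b hb (by omega) (by omega))
    have Codd : ∀ d, d ≤ n - 1 → X n b (2*(n-d)+3) * ca = X n a (2*(n-d)+3) * cb := by
      intro d
      induction d with
      | zero =>
        intro _
        simp only [Nat.sub_zero]
        linear_combination X n b (2*n+3) * hca - X n a (2*n+3) * hcb
      | succ d ih =>
        intro hd
        have ih' := ih (by omega)
        have hb2 : k (2*(n-(d+1))+1) * X n b (2*(n-(d+1))+3)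
            - k (2*(n-(d+1))+2) * X n b (2*(n-(d+1))+5) = cb := by
          rw [← hE2 n k l b (n-(d+1)) (by omega) (by omega)]
          exact hconst_b _
        have ha2 : k (2*(n-(d+1))+1) * X n a (2*(n-(d+1))+3)
            - k (2*(n-(d+1))+2) * X n a (2*(n-(d+1))+5) = ca := by
          rw [← hE2 n k l a (n-(d+1)) (by omega) (by omega)]
          exact hconst_a _
        rw [show 2*(n-(d+1))+5 = 2*(n-d)+3 from by omega] at hb2 ha2
        have hkp : (0:ℝ) < k (2*(n-(d+1))+1) := hk _ (by omega) (by omega)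
        apply mul_left_cancel₀ hkp.ne'
        linear_combination ca * hb2 - cb * ha2 + k (2*(n-(d+1))+2) * ih'
    have Ceven : ∀ j, j ≤ n - 1 → X n b (2*j+6) * ca = X n a (2*j+6) * cb := by
      intro j
      induction j with
      | zero =>
        intro _
        show X n b 6 * ca = X n a 6 * cb
        have hb6 : l 1 * X n b 6 = cb := by rw [← hE6 n hn k l b]; exact hconst_b _
        have ha6 : l 1 * X n a 6 = ca := by rw [← hE6 n hn k l a]; exact hconst_a _
        have hlp : (0:ℝ) < l 1 := hl 1 (by omega) (by omega)
        apply mul_left_cancel₀ hlp.ne'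
        linear_combination ca * hb6 - cb * ha6
      | succ j ih =>
        intro hj
        have ih' := ih (by omega)
        have hb5 : l (2*(n-(n-(j+1)))+1) * X n b (2*(n-(n-(j+1)))+6)
            - l (2*(n-(n-(j+1)))) * X n b (2*(n-(n-(j+1)))+4) = cb := by
          rw [← hE5 n k l b (n-(j+1)) (by omega) (by omega)]
          exact hconst_b _
        have ha5 : l (2*(n-(n-(j+1)))+1) * X n a (2*(n-(n-(j+1)))+6)
            - l (2*(n-(n-(j+1)))) * X n a (2*(n-(n-(j+1)))+4) = ca := by
          rw [← hE5 n k l a (n-(j+1)) (by omega) (by omega)]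
          exact hconst_a _
        rw [show n-(n-(j+1)) = j+1 from by omega] at hb5 ha5
        rw [show 2*(j+1)+4 = 2*j+6 from by omega] at hb5 ha5
        have hlp : (0:ℝ) < l (2*(j+1)+1) := hl _ (by omega) (by omega)
        apply mul_left_cancel₀ hlp.ne'
        linear_combination ca * hb5 - cb * ha5 + l (2*(j+1)) * ih'
    have h5 : X n b 5 * ca = X n a 5 * cb := by
      have h := Codd (n-1) (by omega)
      rwa [show 2*(n-(n-1))+3 = 5 from by omega] at h
    have h2n4 : X n b (2*n+4) * ca = X n a (2*n+4) * cb := by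
      have h := Ceven (n-1) (by omega)
      rwa [show 2*(n-1)+6 = 2*n+4 from by omega] at h
    have P13 : X n b 1 * X n b 3 * ca = X n a 1 * X n a 3 * cb := by
      have hb1 : k 1 * X n b 1 * X n b 3 - k 2 * X n b 5 = cb := by
        rw [← hE1 n k l b]; exact hconst_b _
      have ha1 : k 1 * X n a 1 * X n a 3 - k 2 * X n a 5 = ca := by
        rw [← hE1 n k l a]; exact hconst_a _
      have hkp : (0:ℝ) < k 1 := hk 1 (by omega) (by omega)
      apply mul_left_cancel₀ hkp.ne'
      linear_combination ca * hb1 - cb * ha1 + k 2 * h5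
    have P24 : X n b 2 * X n b 4 * ca = X n a 2 * X n a 4 * cb := by
      have hb4 : l (2*n+1) * X n b 2 * X n b 4 - l (2*n) * X n b (2*n+4) = cb := by
        rw [← hE4 n k l b]; exact hconst_b _
      have ha4 : l (2*n+1) * X n a 2 * X n a 4 - l (2*n) * X n a (2*n+4) = ca := by
        rw [← hE4 n k l a]; exact hconst_a _
      have hlp : (0:ℝ) < l (2*n+1) := hl _ (by omega) (by omega)
      apply mul_left_cancel₀ hlp.ne'
      linear_combination ca * hb4 - cb * ha4 + l (2*n) * h2n4
    have hXm : ∀ m, 5 ≤ m → m ≤ 2*n+4 → X n b m * ca = X n a m * cb := by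
      intro m h5m h24m
      rcases Nat.even_or_odd m with he | ho
      · obtain ⟨u, hu⟩ := he
        obtain ⟨j, hj1, hj2⟩ : ∃ j, j ≤ n-1 ∧ m = 2*j+6 := ⟨u - 3, by omega, by omega⟩
        rw [hj2]; exact Ceven j hj1
      · obtain ⟨u, hu⟩ := ho
        obtain ⟨d, hd1, hd2⟩ : ∃ d, d ≤ n-1 ∧ m = 2*(n-d)+3 := ⟨n+1-u, by omega, by omega⟩
        rw [hd2]; exact Codd d hd1
    set T := cb / ca with hT
    have hT_pos : 0 < T := div_pos cb_pos ca_pos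
    have hs : ∀ m, 5 ≤ m → m ≤ 2*n+4 → X n b m = T * X n a m := by
      intro m h1 h2
      rw [hT, div_mul_eq_mul_div, eq_div_iff ca_pos.ne']
      linear_combination hXm m h1 h2
    have hb13 : X n b 1 * X n b 3 = T * (X n a 1 * X n a 3) := by
      rw [hT, div_mul_eq_mul_div, eq_div_iff ca_pos.ne']
      linear_combination P13
    have hb24 : X n b 2 * X n b 4 = T * (X n a 2 * X n a 4) := by
      rw [hT, div_mul_eq_mul_div, eq_div_iff ca_pos.ne']
      linear_combination P24
    have hlog13 : Real.log (X n b 1) + Real.log (X n b 3)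
        = Real.log T + (Real.log (X n a 1) + Real.log (X n a 3)) := by
      have h := congrArg Real.log hb13
      rwa [Real.log_mul (X_pos n 1 b hb (by omega) (by omega)).ne'
            (X_pos n 3 b hb (by omega) (by omega)).ne',
          Real.log_mul hT_pos.ne'
            (mul_pos (X_pos n 1 a ha (by omega) (by omega))
              (X_pos n 3 a ha (by omega) (by omega))).ne',
          Real.log_mul (X_pos n 1 a ha (by omega) (by omega)).ne'
            (X_pos n 3 a ha (by omega) (by omega)).ne'] at h
    have hlog24 : Real.log (X n b 2) + Real.log (X n b 4)
        = Real.log T + (Real.log (X n a 2) + Real.log (X n a 4)) := by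
      have h := congrArg Real.log hb24
      rwa [Real.log_mul (X_pos n 2 b hb (by omega) (by omega)).ne'
            (X_pos n 4 b hb (by omega) (by omega)).ne',
          Real.log_mul hT_pos.ne'
            (mul_pos (X_pos n 2 a ha (by omega) (by omega))
              (X_pos n 4 a ha (by omega) (by omega))).ne',
          Real.log_mul (X_pos n 2 a ha (by omega) (by omega)).ne'
            (X_pos n 4 a ha (by omega) (by omega)).ne'] at h
    rw [LinearMap.mem_range]
    refine ⟨![Real.log (X n b 2) - Real.log (X n a 2),
              Real.log (X n b 3) - Real.log (X n a 3), Real.log T], ?_⟩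
    funext i
    have hlt := i.isLt
    show ((Bmat n).mulVecLin _) i = Real.log (b i) - Real.log (a i)
    simp only [Matrix.mulVecLin_apply]
    rw [mulVec_B]
    simp only [Matrix.cons_val_zero, Matrix.cons_val_one, Matrix.head_cons,
      Matrix.cons_val_two, Matrix.tail_cons]
    rw [Bmat_row]
    rw [← X_succ n b i, ← X_succ n a i]
    by_cases h0 : (i:ℕ) = 0
    · rw [if_pos h0, h0]
      norm_num
      linarith [hlog13]
    · rw [if_neg h0]
      by_cases g1 : (i:ℕ) = 1
      · rw [if_pos g1, g1]
      · rw [if_neg g1]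
        by_cases g2 : (i:ℕ) = 2
        · rw [if_pos g2, g2]
        · rw [if_neg g2]
          by_cases g3 : (i:ℕ) = 3
          · rw [if_pos g3, g3]
            norm_num
            linarith [hlog24]
          · rw [if_neg g3]
            have hm := hs ((i:ℕ)+1) (by omega) (by omega)
            rw [hm, Real.log_mul hT_pos.ne'
              (X_pos n ((i:ℕ)+1) a ha (by omega) (by omega)).ne']
            ring
  · intro hmem
    rw [LinearMap.mem_range] at hmem
    obtain ⟨y, hy⟩ := hmem
    set T := Real.exp (y 2) with hT
    have hT_pos : 0 < T := Real.exp_pos _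
    have hrow : ∀ i : Fin (2*n+4),
        (if (i:ℕ) = 0 then y 2 - y 1 else if (i:ℕ) = 1 then y 0 else if (i:ℕ) = 2 then y 1
         else if (i:ℕ) = 3 then y 2 - y 0 else y 2)
        = Real.log (X n b ((i:ℕ)+1)) - Real.log (X n a ((i:ℕ)+1)) := by
      intro i
      have h := congrFun hy i
      simp only [Matrix.mulVecLin_apply] at h
      rw [mulVec_B, Bmat_row] at h
      rw [X_succ n b i, X_succ n a i]
      exact h
    have hXlog : ∀ m, 5 ≤ m → m ≤ 2*n+4 → X n b m = T * X n a m := by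
      intro m h1 h2
      have h := hrow ⟨m-1, by omega⟩
      rw [show ((⟨m-1, by omega⟩ : Fin (2*n+4)):ℕ) = m-1 from rfl] at h
      rw [if_neg (by omega), if_neg (by omega), if_neg (by omega), if_neg (by omega)] at h
      rw [show m-1+1 = m from by omega] at h
      have hbp := X_pos n m b hb (by omega) h2
      have hap := X_pos n m a ha (by omega) h2
      rw [← Real.exp_log hbp, ← Real.exp_log hap, hT, ← Real.exp_add]
      congr 1
      linarith [h]
    have h13 : X n b 1 * X n b 3 = T * (X n a 1 * X n a 3) := by
      have h1 := hrow ⟨0, by omega⟩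
      have h3 := hrow ⟨2, by omega⟩
      rw [show ((⟨0, by omega⟩ : Fin (2*n+4)):ℕ) = 0 from rfl] at h1
      rw [show ((⟨2, by omega⟩ : Fin (2*n+4)):ℕ) = 2 from rfl] at h3
      rw [if_pos rfl] at h1
      rw [if_neg (by omega), if_neg (by omega), if_pos rfl] at h3
      norm_num at h1 h3
      have hb1 := X_pos n 1 b hb (by omega) (by omega)
      have hb3 := X_pos n 3 b hb (by omega) (by omega)
      have ha1 := X_pos n 1 a ha (by omega) (by omega)
      have ha3 := X_pos n 3 a ha (by omega) (by omega)
      rw [← Real.exp_log (mul_pos hb1 hb3), ← Real.exp_log (mul_pos ha1 ha3), hT,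
        ← Real.exp_add]
      congr 1
      rw [Real.log_mul hb1.ne' hb3.ne', Real.log_mul ha1.ne' ha3.ne']
      linarith [h1, h3]
    have h24 : X n b 2 * X n b 4 = T * (X n a 2 * X n a 4) := by
      have h1 := hrow ⟨1, by omega⟩
      have h3 := hrow ⟨3, by omega⟩
      rw [show ((⟨1, by omega⟩ : Fin (2*n+4)):ℕ) = 1 from rfl] at h1
      rw [show ((⟨3, by omega⟩ : Fin (2*n+4)):ℕ) = 3 from rfl] at h3
      rw [if_neg (by omega), if_pos rfl] at h1
      rw [if_neg (by omega), if_neg (by omega), if_neg (by omega), if_pos rfl] at h3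
      norm_num at h1 h3
      have hb1 := X_pos n 2 b hb (by omega) (by omega)
      have hb3 := X_pos n 4 b hb (by omega) (by omega)
      have ha1 := X_pos n 2 a ha (by omega) (by omega)
      have ha3 := X_pos n 4 a ha (by omega) (by omega)
      rw [← Real.exp_log (mul_pos hb1 hb3), ← Real.exp_log (mul_pos ha1 ha3), hT,
        ← Real.exp_add]
      congr 1
      rw [Real.log_mul hb1.ne' hb3.ne', Real.log_mul ha1.ne' ha3.ne']
      linarith [h1, h3]
    have hRb : ∀ c0 : Fin (2*n+2), Rvec n k l b c0 = T * Rvec n k l a c0 := by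
      intro c0
      have hc := c0.isLt
      simp only [Rvec]
      split_ifs with g1 g2 g3 g4 g5
      · linear_combination k 1 * h13 - k 2 * hXlog 5 (by omega) (by omega)
      · linear_combination k (2*((c0:ℕ)+1-1)+1) * hXlog (2*((c0:ℕ)+1-1)+3) (by omega) (by omega)
          - k (2*((c0:ℕ)+1-1)+2) * hXlog (2*((c0:ℕ)+1-1)+5) (by omega) (by omega)
      · linear_combination k (2*n+1) * hXlog (2*n+3) (by omega) (by omega)
      · linear_combination l (2*n+1) * h24 - l (2*n) * hXlog (2*n+4) (by omega) (by omega)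
      · linear_combination
          l (2*(n-((c0:ℕ)+1-(n+2)))+1) * hXlog (2*(n-((c0:ℕ)+1-(n+2)))+6) (by omega) (by omega)
          - l (2*(n-((c0:ℕ)+1-(n+2)))) * hXlog (2*(n-((c0:ℕ)+1-(n+2)))+4) (by omega) (by omega)
      · linear_combination l 1 * hXlog 6 (by omega) (by omega)
    have hfe : Rvec n k l b = T • Rvec n k l a := by
      funext c0
      rw [Pi.smul_apply, smul_eq_mul]
      exact hRb c0
    rw [hfe, Matrix.mulVec_smul, hass, smul_zero]

end
end

section
/- If α ∈ ℝ^{2n+4} lies in the column space of the matrix B, s ∈ ℝ^{2n+4} lies in the column space of Γ, and sign(αᵢ) = sign(sᵢ) for every i ∈ {1,…,2n+4}, then α = 0 and s = 0. (That is, the sign vectors of the image of B and of the stoichiometric subspace intersect only in the zero sign vector.) -/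
open Matrix Finset

noncomputable section

def wK (n : ℕ) : Fin (2*n+4) → ℝ :=
  fun i => if (i:ℕ) = 0 ∨ ((i:ℕ) % 2 = 0 ∧ 4 ≤ (i:ℕ)) then 1 else 0

def wF (n : ℕ) : Fin (2*n+4) → ℝ :=
  fun i => if (i:ℕ) = 1 ∨ ((i:ℕ) % 2 = 1 ∧ 5 ≤ (i:ℕ)) then 1 else 0

def wS (n : ℕ) : Fin (2*n+4) → ℝ := fun i => if 2 ≤ (i:ℕ) then 1 else 0

lemma dotE (n : ℕ) (w : Fin (2*n+4) → ℝ) (m : ℕ) (hm : 1 ≤ m) :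
    ∑ j, w j * E n m j = X n w m := by
  unfold X
  by_cases h : m - 1 < 2*n+4
  · rw [dif_pos h, Finset.sum_eq_single (⟨m-1, h⟩ : Fin (2*n+4))]
    · unfold E
      rw [if_pos (by simp; omega), mul_one]
    · intro b _ hb
      unfold E
      rw [if_neg, mul_zero]
      intro hc
      exact hb (Fin.ext (by simp; omega))
    · intro h'; exact absurd (Finset.mem_univ _) h'
  · rw [dif_neg h]
    refine Finset.sum_eq_zero fun j _ => ?_
    unfold E
    rw [if_neg (by have := j.isLt; omega), mul_zero]

lemma X_wK (n m : ℕ) (h1 : 1 ≤ m) (h2 : m ≤ 2*n+4) :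
    X n (wK n) m = if m = 1 ∨ (m % 2 = 1 ∧ 5 ≤ m) then 1 else 0 := by
  unfold X wK
  rw [dif_pos (by omega)]
  simp only [Fin.val_mk]
  split_ifs <;> first | rfl | omega

lemma X_wF (n m : ℕ) (h1 : 1 ≤ m) (h2 : m ≤ 2*n+4) :
    X n (wF n) m = if m = 2 ∨ (m % 2 = 0 ∧ 6 ≤ m) then 1 else 0 := by
  unfold X wF
  rw [dif_pos (by omega)]
  simp only [Fin.val_mk]
  split_ifs <;> first | rfl | omega

lemma X_wS (n m : ℕ) (h1 : 1 ≤ m) (h2 : m ≤ 2*n+4) :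
    X n (wS n) m = if 3 ≤ m then 1 else 0 := by
  unfold X wS
  rw [dif_pos (by omega)]
  simp only [Fin.val_mk]
  split_ifs <;> first | rfl | omega

lemma dot_col (n : ℕ) (hn : 1 ≤ n) (w : Fin (2*n+4) → ℝ) (c0 : Fin (2*n+2)) :
    ∑ r, w r * Gamma n r c0 =
      if (c0:ℕ)+1 = 1 then X n w 5 - X n w 1 - X n w 3
      else if (c0:ℕ)+1 ≤ n then X n w (2*((c0:ℕ)+1-1)+5) - X n w (2*((c0:ℕ)+1-1)+3)
      else if (c0:ℕ)+1 = n+1 then X n w 1 + X n w 4 - X n w (2*n+3)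
      else if (c0:ℕ)+1 = n+2 then X n w (2*n+4) - X n w 2 - X n w 4
      else if (c0:ℕ)+1 ≤ 2*n+1 then
        X n w (2*n+4-2*((c0:ℕ)+1-(n+2))) - X n w (2*n+6-2*((c0:ℕ)+1-(n+2)))
      else X n w 2 + X n w 3 - X n w 6 := by
  have hc := c0.isLt
  unfold Gamma
  simp only [Matrix.of_apply]
  by_cases h1 : (c0:ℕ)+1 = 1
  · simp only [if_pos h1, Pi.sub_apply, mul_sub, Finset.sum_sub_distrib]
    rw [dotE n w 5 (by omega), dotE n w 1 (by omega), dotE n w 3 (by omega)]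
  · by_cases h2 : (c0:ℕ)+1 ≤ n
    · simp only [if_neg h1, if_pos h2, Pi.sub_apply, mul_sub, Finset.sum_sub_distrib]
      rw [dotE n w _ (by omega), dotE n w _ (by omega)]
    · by_cases h3 : (c0:ℕ)+1 = n+1
      · simp only [if_neg h1, if_neg h2, if_pos h3, Pi.sub_apply, Pi.add_apply,
          mul_sub, mul_add, Finset.sum_sub_distrib, Finset.sum_add_distrib]
        rw [dotE n w 1 (by omega), dotE n w 4 (by omega), dotE n w _ (by omega)]
      · by_cases h4 : (c0:ℕ)+1 = n+2
        · simp only [if_neg h1, if_neg h2, if_neg h3, if_pos h4, Pi.sub_apply,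
            mul_sub, Finset.sum_sub_distrib]
          rw [dotE n w _ (by omega), dotE n w 2 (by omega), dotE n w 4 (by omega)]
        · by_cases h5 : (c0:ℕ)+1 ≤ 2*n+1
          · simp only [if_neg h1, if_neg h2, if_neg h3, if_neg h4, if_pos h5,
              Pi.sub_apply, mul_sub, Finset.sum_sub_distrib]
            rw [dotE n w _ (by omega), dotE n w _ (by omega)]
          · simp only [if_neg h1, if_neg h2, if_neg h3, if_neg h4, if_neg h5,
              Pi.sub_apply, Pi.add_apply, mul_sub, mul_add,
              Finset.sum_sub_distrib, Finset.sum_add_distrib]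
            rw [dotE n w 2 (by omega), dotE n w 3 (by omega), dotE n w 6 (by omega)]

lemma dotK (n : ℕ) (hn : 1 ≤ n) (c0 : Fin (2*n+2)) :
    ∑ r, wK n r * Gamma n r c0 = 0 := by
  have hc := c0.isLt
  rw [dot_col n hn]
  split_ifs with h1 h2 h3 h4 h5
  · rw [X_wK n, X_wK n, X_wK n] <;> first | omega | (split_ifs <;> (try norm_num) <;> (try omega) <;> simp_all)
  · rw [X_wK n, X_wK n] <;> first | omega | (split_ifs <;> (try norm_num) <;> (try omega) <;> simp_all)
  · rw [X_wK n, X_wK n, X_wK n] <;> first | omega | (split_ifs <;> (try norm_num) <;> (try omega) <;> simp_all)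
  · rw [X_wK n, X_wK n, X_wK n] <;> first | omega | (split_ifs <;> (try norm_num) <;> (try omega) <;> simp_all)
  · rw [X_wK n, X_wK n] <;> first | omega | (split_ifs <;> (try norm_num) <;> (try omega) <;> simp_all)
  · rw [X_wK n, X_wK n, X_wK n] <;> first | omega | (split_ifs <;> (try norm_num) <;> (try omega) <;> simp_all)

lemma dotF (n : ℕ) (hn : 1 ≤ n) (c0 : Fin (2*n+2)) :
    ∑ r, wF n r * Gamma n r c0 = 0 := by
  have hc := c0.isLt
  rw [dot_col n hn]
  split_ifs with h1 h2 h3 h4 h5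
  · rw [X_wF n, X_wF n, X_wF n] <;> first | omega | (split_ifs <;> (try norm_num) <;> (try omega) <;> simp_all)
  · rw [X_wF n, X_wF n] <;> first | omega | (split_ifs <;> (try norm_num) <;> (try omega) <;> simp_all)
  · rw [X_wF n, X_wF n, X_wF n] <;> first | omega | (split_ifs <;> (try norm_num) <;> (try omega) <;> simp_all)
  · rw [X_wF n, X_wF n, X_wF n] <;> first | omega | (split_ifs <;> (try norm_num) <;> (try omega) <;> simp_all)
  · rw [X_wF n, X_wF n] <;> first | omega | (split_ifs <;> (try norm_num) <;> (try omega) <;> simp_all)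
  · rw [X_wF n, X_wF n, X_wF n] <;> first | omega | (split_ifs <;> (try norm_num) <;> (try omega) <;> simp_all)

lemma dotS (n : ℕ) (hn : 1 ≤ n) (c0 : Fin (2*n+2)) :
    ∑ r, wS n r * Gamma n r c0 = 0 := by
  have hc := c0.isLt
  rw [dot_col n hn]
  split_ifs with h1 h2 h3 h4 h5
  · rw [X_wS n, X_wS n, X_wS n] <;> first | omega | (split_ifs <;> (try norm_num) <;> (try omega) <;> simp_all)
  · rw [X_wS n, X_wS n] <;> first | omega | (split_ifs <;> (try norm_num) <;> (try omega) <;> simp_all)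
  · rw [X_wS n, X_wS n, X_wS n] <;> first | omega | (split_ifs <;> (try norm_num) <;> (try omega) <;> simp_all)
  · rw [X_wS n, X_wS n, X_wS n] <;> first | omega | (split_ifs <;> (try norm_num) <;> (try omega) <;> simp_all)
  · rw [X_wS n, X_wS n] <;> first | omega | (split_ifs <;> (try norm_num) <;> (try omega) <;> simp_all)
  · rw [X_wS n, X_wS n, X_wS n] <;> first | omega | (split_ifs <;> (try norm_num) <;> (try omega) <;> simp_all)

lemma Bv (n : ℕ) (y : Fin 3 → ℝ) (r : Fin (2*n+4)) :
    (Bmat n).mulVec y r =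
      if (r:ℕ) = 0 then y 2 - y 1
      else if (r:ℕ) = 1 then y 0
      else if (r:ℕ) = 2 then y 1
      else if (r:ℕ) = 3 then y 2 - y 0
      else y 2 := by
  simp only [Matrix.mulVec, dotProduct, Fin.sum_univ_three, Bmat, Matrix.of_apply,
    show ((0:Fin 3):ℕ) = 0 from rfl, show ((1:Fin 3):ℕ) = 1 from rfl,
    show ((2:Fin 3):ℕ) = 2 from rfl]
  rcases r with ⟨rv, hr⟩
  simp only [Fin.val_mk]
  rcases rv with _|_|_|_|rv
  · norm_num; ring
  · norm_num
  · norm_num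
  · norm_num; ring
  · norm_num
    split_ifs <;> first | (exfalso; omega) | ring

lemma pos_of_sign_eq_one {x : ℝ} (h : Real.sign x = 1) : 0 < x := by
  rcases lt_trichotomy x 0 with h' | h' | h'
  · rw [Real.sign_of_neg h'] at h; norm_num at h
  · rw [h', Real.sign_zero] at h; norm_num at h
  · exact h'

lemma neg_of_sign_eq_neg_one {x : ℝ} (h : Real.sign x = -1) : x < 0 := by
  rcases lt_trichotomy x 0 with h' | h' | h'
  · exact h'
  · rw [h', Real.sign_zero] at h; norm_num at h
  · rw [Real.sign_of_pos h'] at h; norm_num at h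

lemma neg_head {N : ℕ} (f : Fin N → ℝ) (i : Fin N) (hsum : ∑ r, f r = 0)
    (hnn : ∀ r, r ≠ i → 0 ≤ f r) (j : Fin N) (hj : j ≠ i) (hjpos : 0 < f j) : f i < 0 := by
  have h1 : f i + ∑ r ∈ Finset.univ.erase i, f r = 0 := by
    rw [Finset.add_sum_erase _ f (Finset.mem_univ i)]; exact hsum
  have h2 : f j ≤ ∑ r ∈ Finset.univ.erase i, f r :=
    Finset.single_le_sum (fun r hr => hnn r (Finset.ne_of_mem_erase hr))
      (Finset.mem_erase.2 ⟨hj, Finset.mem_univ j⟩)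
  linarith

lemma dot_s (n : ℕ) (w s : Fin (2*n+4) → ℝ) (v : Fin (2*n+2) → ℝ)
    (hv : Gamma n *ᵥ v = s) (hw : ∀ c0, ∑ r, w r * Gamma n r c0 = 0) :
    ∑ r, w r * s r = 0 := by
  rw [← hv]
  simp only [Matrix.mulVec, dotProduct]
  calc ∑ r, w r * ∑ c, Gamma n r c * v c
      = ∑ r, ∑ c, w r * Gamma n r c * v c := by
        refine Finset.sum_congr rfl fun r _ => ?_
        rw [Finset.mul_sum]
        exact Finset.sum_congr rfl fun c _ => by ring
    _ = ∑ c, ∑ r, w r * Gamma n r c * v c := Finset.sum_comm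
    _ = ∑ c, (∑ r, w r * Gamma n r c) * v c := by
        refine Finset.sum_congr rfl fun c _ => ?_
        rw [Finset.sum_mul]
    _ = 0 := by simp [hw]

lemma key (n : ℕ) (hn : 1 ≤ n) (α s : Fin (2*n+4) → ℝ)
    (hα : α ∈ LinearMap.range (Matrix.mulVecLin (Bmat n)))
    (hs : s ∈ LinearMap.range (Matrix.mulVecLin (Gamma n)))
    (hsign : ∀ i, Real.sign (α i) = Real.sign (s i))
    (hpos : 0 < α ⟨4, by omega⟩) : False := by
  obtain ⟨y, hy⟩ := hα
  obtain ⟨v, hv⟩ := hs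
  rw [Matrix.mulVecLin_apply] at hy hv
  have hαr : ∀ r : Fin (2*n+4), α r =
      if (r:ℕ) = 0 then y 2 - y 1
      else if (r:ℕ) = 1 then y 0
      else if (r:ℕ) = 2 then y 1
      else if (r:ℕ) = 3 then y 2 - y 0
      else y 2 := fun r => by rw [← hy]; exact Bv n y r
  have e0 : α ⟨0, by omega⟩ = y 2 - y 1 := by rw [hαr]; norm_num
  have e1 : α ⟨1, by omega⟩ = y 0 := by rw [hαr]; norm_num
  have e2 : α ⟨2, by omega⟩ = y 1 := by rw [hαr]; norm_num
  have e3 : α ⟨3, by omega⟩ = y 2 - y 0 := by rw [hαr]; norm_num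
  have e4 : ∀ r : Fin (2*n+4), 4 ≤ (r:ℕ) → α r = y 2 := fun r hr => by
    rw [hαr, if_neg (by omega), if_neg (by omega), if_neg (by omega), if_neg (by omega)]
  have hy2 : 0 < y 2 := by
    have h := e4 ⟨4, by omega⟩ (by norm_num)
    rwa [h] at hpos
  have hs4 : ∀ r : Fin (2*n+4), 4 ≤ (r:ℕ) → 0 < s r := fun r hr =>
    pos_of_sign_eq_one (by rw [← hsign r, e4 r hr]; exact Real.sign_of_pos hy2)
  have hK : ∑ r, wK n r * s r = 0 := dot_s n (wK n) s v hv (dotK n hn)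
  have hF : ∑ r, wF n r * s r = 0 := dot_s n (wF n) s v hv (dotF n hn)
  have hS : ∑ r, wS n r * s r = 0 := dot_s n (wS n) s v hv (dotS n hn)
  -- s₀ < 0 from the kinase conservation law
  have hs0 : s ⟨0, by omega⟩ < 0 := by
    have hnn : ∀ r : Fin (2*n+4), r ≠ ⟨0, by omega⟩ → 0 ≤ wK n r * s r := by
      intro r hr
      unfold wK
      split_ifs with h
      · rw [one_mul]
        refine le_of_lt (hs4 r ?_)
        rcases h with h | h
        · exact absurd (Fin.ext h) hr
        · exact h.2
      · rw [zero_mul]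
    have hw4 : wK n ⟨4, by omega⟩ = 1 := by unfold wK; norm_num
    have h4pos : 0 < wK n ⟨4, by omega⟩ * s ⟨4, by omega⟩ := by
      rw [hw4, one_mul]; exact hs4 _ (by norm_num)
    have hlt := neg_head (fun r => wK n r * s r) ⟨0, by omega⟩ hK hnn ⟨4, by omega⟩
      (Fin.ne_of_val_ne (by norm_num)) h4pos
    have hw0 : wK n ⟨0, by omega⟩ = 1 := by unfold wK; norm_num
    have hlt' : wK n ⟨0, by omega⟩ * s ⟨0, by omega⟩ < 0 := hlt
    rwa [hw0, one_mul] at hlt'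
  -- hence y1 > 0 and s₂ > 0
  have hα0 : α ⟨0, by omega⟩ < 0 :=
    neg_of_sign_eq_neg_one (by rw [hsign _]; exact Real.sign_of_neg hs0)
  have hy1 : 0 < y 1 := by rw [e0] at hα0; linarith
  have hs2 : 0 < s ⟨2, by omega⟩ :=
    pos_of_sign_eq_one (by rw [← hsign _, e2]; exact Real.sign_of_pos hy1)
  -- s₁ < 0 from the phosphatase conservation law
  have hs1 : s ⟨1, by omega⟩ < 0 := by
    have hnn : ∀ r : Fin (2*n+4), r ≠ ⟨1, by omega⟩ → 0 ≤ wF n r * s r := by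
      intro r hr
      unfold wF
      split_ifs with h
      · rw [one_mul]
        refine le_of_lt (hs4 r ?_)
        rcases h with h | h
        · exact absurd (Fin.ext h) hr
        · omega
      · rw [zero_mul]
    have hw5 : wF n ⟨5, by omega⟩ = 1 := by unfold wF; norm_num
    have h5pos : 0 < wF n ⟨5, by omega⟩ * s ⟨5, by omega⟩ := by
      rw [hw5, one_mul]; exact hs4 _ (by norm_num)
    have hlt := neg_head (fun r => wF n r * s r) ⟨1, by omega⟩ hF hnn ⟨5, by omega⟩
      (Fin.ne_of_val_ne (by norm_num)) h5pos
    have hw1 : wF n ⟨1, by omega⟩ = 1 := by unfold wF; norm_num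
    have hlt' : wF n ⟨1, by omega⟩ * s ⟨1, by omega⟩ < 0 := hlt
    rwa [hw1, one_mul] at hlt'
  -- hence y0 < 0 and s₃ > 0
  have hα1 : α ⟨1, by omega⟩ < 0 :=
    neg_of_sign_eq_neg_one (by rw [hsign _]; exact Real.sign_of_neg hs1)
  have hy0 : y 0 < 0 := by rw [e1] at hα1; exact hα1
  have hs3 : 0 < s ⟨3, by omega⟩ := by
    refine pos_of_sign_eq_one (by rw [← hsign _, e3]; exact Real.sign_of_pos (by linarith))
  -- the substrate conservation law gives a contradiction
  have hpos' : 0 < ∑ r, wS n r * s r := by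
    refine Finset.sum_pos' ?_ ⟨⟨2, by omega⟩, Finset.mem_univ _, ?_⟩
    · intro r _
      unfold wS
      split_ifs with h
      · rw [one_mul]
        rcases Nat.lt_or_ge (r:ℕ) 4 with h' | h'
        · have : (r:ℕ) = 2 ∨ (r:ℕ) = 3 := by omega
          rcases this with h'' | h''
          · have hr2 : r = ⟨2, by omega⟩ := Fin.ext h''
            rw [hr2]; exact le_of_lt hs2
          · have hr3 : r = ⟨3, by omega⟩ := Fin.ext h''
            rw [hr3]; exact le_of_lt hs3
        · exact le_of_lt (hs4 r h')
      · rw [zero_mul]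
    · have hw2 : wS n ⟨2, by omega⟩ = 1 := by unfold wS; norm_num
      rw [hw2, one_mul]; exact hs2
  linarith


/-- The sign vectors of the image of `B` and of the stoichiometric subspace (the column
space of `Γ`) intersect only in the zero sign vector: if `α ∈ im(B)`, `s ∈ im(Γ)` and
`sign(αᵢ) = sign(sᵢ)` for all `i`, then `α = 0` and `s = 0`. -/
theorem sign_condition (n : ℕ) (hn : 1 ≤ n) (α s : Fin (2*n+4) → ℝ)
    (hα : α ∈ LinearMap.range (Matrix.mulVecLin (Bmat n)))
    (hs : s ∈ LinearMap.range (Matrix.mulVecLin (Gamma n)))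
    (hsign : ∀ i, Real.sign (α i) = Real.sign (s i)) :
    α = 0 ∧ s = 0 := by
  rcases lt_trichotomy (α ⟨4, by omega⟩) 0 with h4 | h4 | h4
  · exact absurd (key n hn (-α) (-s) (neg_mem hα) (neg_mem hs)
      (fun i => by rw [Pi.neg_apply, Pi.neg_apply, Real.sign_neg, Real.sign_neg, hsign i])
      (by rw [Pi.neg_apply]; linarith)) (by simp)
  · -- the zero case
    obtain ⟨y, hy⟩ := hα
    obtain ⟨v, hv⟩ := hs
    rw [Matrix.mulVecLin_apply] at hy hv
    have hαr : ∀ r : Fin (2*n+4), α r =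
        if (r:ℕ) = 0 then y 2 - y 1
        else if (r:ℕ) = 1 then y 0
        else if (r:ℕ) = 2 then y 1
        else if (r:ℕ) = 3 then y 2 - y 0
        else y 2 := fun r => by rw [← hy]; exact Bv n y r
    have e0 : α ⟨0, by omega⟩ = y 2 - y 1 := by rw [hαr]; norm_num
    have e1 : α ⟨1, by omega⟩ = y 0 := by rw [hαr]; norm_num
    have e4 : ∀ r : Fin (2*n+4), 4 ≤ (r:ℕ) → α r = y 2 := fun r hr => by
      rw [hαr, if_neg (by omega), if_neg (by omega), if_neg (by omega), if_neg (by omega)]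
    have hy2 : y 2 = 0 := by
      have h := e4 ⟨4, by omega⟩ (by norm_num)
      rw [h4] at h; exact h.symm
    have hshi : ∀ r : Fin (2*n+4), 4 ≤ (r:ℕ) → s r = 0 := fun r hr =>
      Real.sign_eq_zero_iff.1 (by rw [← hsign r, e4 r hr, hy2, Real.sign_zero])
    have hK : ∑ r, wK n r * s r = 0 := dot_s n (wK n) s v hv (dotK n hn)
    have hF : ∑ r, wF n r * s r = 0 := dot_s n (wF n) s v hv (dotF n hn)
    have hs0 : s ⟨0, by omega⟩ = 0 := by
      rw [Finset.sum_eq_single (⟨0, by omega⟩ : Fin (2*n+4))] at hK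
      · have hw0 : wK n ⟨0, by omega⟩ = 1 := by unfold wK; norm_num
        rwa [hw0, one_mul] at hK
      · intro r _ hr
        unfold wK
        split_ifs with hcond
        · rcases hcond with h' | h'
          · exact absurd (Fin.ext h') hr
          · rw [hshi r h'.2, mul_zero]
        · rw [zero_mul]
      · intro h'; exact absurd (Finset.mem_univ _) h'
    have hs1 : s ⟨1, by omega⟩ = 0 := by
      rw [Finset.sum_eq_single (⟨1, by omega⟩ : Fin (2*n+4))] at hF
      · have hw1 : wF n ⟨1, by omega⟩ = 1 := by unfold wF; norm_num
        rwa [hw1, one_mul] at hF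
      · intro r _ hr
        unfold wF
        split_ifs with hcond
        · rcases hcond with h' | h'
          · exact absurd (Fin.ext h') hr
          · rw [hshi r (by omega), mul_zero]
        · rw [zero_mul]
      · intro h'; exact absurd (Finset.mem_univ _) h'
    have hy1 : y 1 = 0 := by
      have hα0 : α ⟨0, by omega⟩ = 0 :=
        Real.sign_eq_zero_iff.1 (by rw [hsign _, hs0, Real.sign_zero])
      rw [e0, hy2] at hα0; linarith
    have hy0 : y 0 = 0 := by
      have hα1 : α ⟨1, by omega⟩ = 0 :=
        Real.sign_eq_zero_iff.1 (by rw [hsign _, hs1, Real.sign_zero])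
      rw [e1] at hα1; exact hα1
    have hαz : α = 0 := by
      funext r
      rw [hαr r]
      split_ifs <;> simp [hy0, hy1, hy2]
    refine ⟨hαz, funext fun r => ?_⟩
    have := hsign r
    rw [hαz] at this
    simp only [Pi.zero_apply, Real.sign_zero] at this
    exact (Real.sign_eq_zero_iff.1 this.symm) ▸ rfl
  · exact absurd (key n hn α s hα hs hsign h4) (by simp)


end
end

section
/- For every vector a ∈ ℝ^{2n+4} with all coordinates strictly positive, the map from (0,∞)³ to ℝ³ sending ξ to 𝒜·(a ∘ Ψ_B(ξ)), where ∘ denotes the componentwise (Hadamard) product, is injective. -/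
open Matrix Finset

noncomputable section

/-- The conservation matrix `𝒜` of the processive `n`-site network: row 1 has ones in
columns 1, 5, 7, …, 2n+3; row 2 has ones in columns 2, 6, 8, …, 2n+4; row 3 has ones in
columns 3, 4, …, 2n+4 (columns indexed 1-based). -/
def Amat (n : ℕ) : Matrix (Fin 3) (Fin (2*n+4)) ℝ :=
  Matrix.of fun r c =>
    let m := (c : ℕ) + 1
    if (r : ℕ) = 0 then (if m = 1 ∨ (m % 2 = 1 ∧ 5 ≤ m) then (1:ℝ) else 0)
    else if (r : ℕ) = 1 then (if m = 2 ∨ (m % 2 = 0 ∧ 6 ≤ m) then 1 else 0)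
    else (if 3 ≤ m then 1 else 0)

/-- The monomial map `Ψ_B : (0,∞)³ → ℝ^(2n+4)` defined by the rows of `B`
(using real exponentiation). -/
def PsiB (n : ℕ) (ξ : Fin 3 → ℝ) : Fin (2*n+4) → ℝ := fun i =>
  (ξ 0) ^ (Bmat n i 0) * (ξ 1) ^ (Bmat n i 1) * (ξ 2) ^ (Bmat n i 2)

-- singleton sum helper
lemma sum_ite_val (n m : ℕ) (hm : m < 2*n+4) (f : Fin (2*n+4) → ℝ) :
    (∑ i : Fin (2*n+4), if (i:ℕ) = m then f i else 0) = f ⟨m, hm⟩ := by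
  rw [Finset.sum_eq_single (⟨m, hm⟩ : Fin (2*n+4))]
  · simp
  · intro b _ hb
    have : (b:ℕ) ≠ m := fun h => hb (Fin.ext h)
    simp [this]
  · simp

lemma psi_big (n : ℕ) (ξ : Fin 3 → ℝ) (i : Fin (2*n+4)) (hi : 4 ≤ (i:ℕ)) :
    PsiB n ξ i = ξ 2 := by
  have h1 : (i:ℕ) ≠ 1 := by omega
  have h2 : (i:ℕ) ≠ 3 := by omega
  have h3 : (i:ℕ) ≠ 2 := by omega
  have h4 : (i:ℕ) ≠ 0 := by omega
  simp [PsiB, Bmat, h1, h2, h3, h4, Real.rpow_zero, Real.rpow_one, -Fin.val_eq_zero_iff]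

lemma row0_eval (n : ℕ) (a : Fin (2*n+4) → ℝ) (ξ : Fin 3 → ℝ) (h1 : 0 < ξ 1) :
    (Amat n).mulVec (fun i => a i * PsiB n ξ i) 0
      = a ⟨0, by omega⟩ * (ξ 2 / ξ 1)
        + (∑ i : Fin (2*n+4), if 4 ≤ (i:ℕ) ∧ (i:ℕ) % 2 = 0 then a i else 0) * ξ 2 := by
  have key : ∀ i : Fin (2*n+4), Amat n 0 i * (a i * PsiB n ξ i)
      = (if (i:ℕ) = 0 then a i * (ξ 2 / ξ 1) else 0)
        + (if 4 ≤ (i:ℕ) ∧ (i:ℕ) % 2 = 0 then a i else 0) * ξ 2 := by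
    intro i
    rcases Nat.lt_or_ge (i:ℕ) 4 with h | h
    · have hor : (i:ℕ) = 0 ∨ (i:ℕ) = 1 ∨ (i:ℕ) = 2 ∨ (i:ℕ) = 3 := by omega
      rcases hor with h0 | h0 | h0 | h0
      · have : PsiB n ξ i = ξ 2 / ξ 1 := by
          simp [PsiB, Bmat, h0, Real.rpow_zero, Real.rpow_one, Real.rpow_neg_one, -Fin.val_eq_zero_iff]
          field_simp
        simp [Amat, h0, this, -Fin.val_eq_zero_iff]
        try ring
      all_goals simp [Amat, h0, -Fin.val_eq_zero_iff]
    · have hpsi : PsiB n ξ i = ξ 2 := psi_big n ξ i h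
      have hne1 : (i:ℕ) + 1 ≠ 1 := by omega
      rcases Nat.even_or_odd (i:ℕ) with he | he
      · have hmod : (i:ℕ) % 2 = 0 := Nat.even_iff.mp he
        have h5 : ((i:ℕ)+1) % 2 = 1 ∧ 5 ≤ (i:ℕ)+1 := by omega
        simp [Amat, hpsi, hne1, h5, show ¬ (i:ℕ) = 0 by omega, h, hmod]
        try ring
      · have hmod : (i:ℕ) % 2 = 1 := Nat.odd_iff.mp he
        have h5 : ¬ (((i:ℕ)+1) % 2 = 1) := by omega
        simp [Amat, hpsi, hne1, h5, show ¬ (i:ℕ) = 0 by omega, hmod, -Fin.val_eq_zero_iff]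
  calc (Amat n).mulVec (fun i => a i * PsiB n ξ i) 0
      = ∑ i : Fin (2*n+4), Amat n 0 i * (a i * PsiB n ξ i) := rfl
    _ = ∑ i : Fin (2*n+4), ((if (i:ℕ) = 0 then a i * (ξ 2 / ξ 1) else 0)
        + (if 4 ≤ (i:ℕ) ∧ (i:ℕ) % 2 = 0 then a i else 0) * ξ 2) :=
        Finset.sum_congr rfl fun i _ => key i
    _ = (∑ i : Fin (2*n+4), if (i:ℕ) = 0 then a i * (ξ 2 / ξ 1) else 0)
        + (∑ i : Fin (2*n+4), (if 4 ≤ (i:ℕ) ∧ (i:ℕ) % 2 = 0 then a i else 0) * ξ 2) :=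
        Finset.sum_add_distrib
    _ = _ := by
        rw [← Finset.sum_mul, sum_ite_val n 0 (by omega)]


-- continuing: rows 1, 2, positivity, real lemma
lemma row1_eval (n : ℕ) (a : Fin (2*n+4) → ℝ) (ξ : Fin 3 → ℝ) :
    (Amat n).mulVec (fun i => a i * PsiB n ξ i) 1
      = a ⟨1, by omega⟩ * ξ 0
        + (∑ i : Fin (2*n+4), if 4 ≤ (i:ℕ) ∧ (i:ℕ) % 2 = 1 then a i else 0) * ξ 2 := by
  have key : ∀ i : Fin (2*n+4), Amat n 1 i * (a i * PsiB n ξ i)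
      = (if (i:ℕ) = 1 then a i * ξ 0 else 0)
        + (if 4 ≤ (i:ℕ) ∧ (i:ℕ) % 2 = 1 then a i else 0) * ξ 2 := by
    intro i
    rcases Nat.lt_or_ge (i:ℕ) 4 with h | h
    · have hor : (i:ℕ) = 0 ∨ (i:ℕ) = 1 ∨ (i:ℕ) = 2 ∨ (i:ℕ) = 3 := by omega
      rcases hor with h0 | h0 | h0 | h0
      · simp [Amat, h0]
      · have : PsiB n ξ i = ξ 0 := by
          simp [PsiB, Bmat, h0, Real.rpow_zero, Real.rpow_one, -Fin.val_eq_zero_iff]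
        simp [Amat, h0, this]
        try ring
      all_goals simp [Amat, h0]
    · have hpsi : PsiB n ξ i = ξ 2 := psi_big n ξ i h
      rcases Nat.even_or_odd (i:ℕ) with he | he
      · have hmod : (i:ℕ) % 2 = 0 := Nat.even_iff.mp he
        have h5 : ¬ (((i:ℕ)+1) % 2 = 0) := by omega
        simp [Amat, hpsi, h5, show ¬ (i:ℕ) = 1 by omega, hmod]
      · have hmod : (i:ℕ) % 2 = 1 := Nat.odd_iff.mp he
        have h5 : ((i:ℕ)+1) % 2 = 0 ∧ 6 ≤ (i:ℕ)+1 := by omega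
        simp [Amat, hpsi, h5, show ¬ (i:ℕ) = 1 by omega, h, hmod]
        try ring
        try exact fun h' => absurd h' (by omega)
  calc (Amat n).mulVec (fun i => a i * PsiB n ξ i) 1
      = ∑ i : Fin (2*n+4), Amat n 1 i * (a i * PsiB n ξ i) := rfl
    _ = ∑ i : Fin (2*n+4), ((if (i:ℕ) = 1 then a i * ξ 0 else 0)
        + (if 4 ≤ (i:ℕ) ∧ (i:ℕ) % 2 = 1 then a i else 0) * ξ 2) :=
        Finset.sum_congr rfl fun i _ => key i
    _ = (∑ i : Fin (2*n+4), if (i:ℕ) = 1 then a i * ξ 0 else 0)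
        + (∑ i : Fin (2*n+4), (if 4 ≤ (i:ℕ) ∧ (i:ℕ) % 2 = 1 then a i else 0) * ξ 2) :=
        Finset.sum_add_distrib
    _ = _ := by
        rw [← Finset.sum_mul, sum_ite_val n 1 (by omega)]

lemma row2_eval (n : ℕ) (a : Fin (2*n+4) → ℝ) (ξ : Fin 3 → ℝ) (h0 : 0 < ξ 0) :
    (Amat n).mulVec (fun i => a i * PsiB n ξ i) 2
      = a ⟨2, by omega⟩ * ξ 1 + a ⟨3, by omega⟩ * (ξ 2 / ξ 0)
        + (∑ i : Fin (2*n+4), if 4 ≤ (i:ℕ) then a i else 0) * ξ 2 := by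
  have key : ∀ i : Fin (2*n+4), Amat n 2 i * (a i * PsiB n ξ i)
      = ((if (i:ℕ) = 2 then a i * ξ 1 else 0)
        + (if (i:ℕ) = 3 then a i * (ξ 2 / ξ 0) else 0))
        + (if 4 ≤ (i:ℕ) then a i else 0) * ξ 2 := by
    intro i
    rcases Nat.lt_or_ge (i:ℕ) 4 with h | h
    · have hor : (i:ℕ) = 0 ∨ (i:ℕ) = 1 ∨ (i:ℕ) = 2 ∨ (i:ℕ) = 3 := by omega
      rcases hor with h0' | h0' | h0' | h0'
      · simp [Amat, h0']
      · simp [Amat, h0']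
      · have : PsiB n ξ i = ξ 1 := by
          simp [PsiB, Bmat, h0', Real.rpow_zero, Real.rpow_one]
        simp [Amat, h0', this]
        try ring
      · have : PsiB n ξ i = ξ 2 / ξ 0 := by
          simp [PsiB, Bmat, h0', Real.rpow_zero, Real.rpow_one, Real.rpow_neg_one, -Fin.val_eq_zero_iff]
          field_simp
        simp [Amat, h0', this]
        try ring
    · have hpsi : PsiB n ξ i = ξ 2 := psi_big n ξ i h
      simp [Amat, hpsi, show 3 ≤ (i:ℕ)+1 by omega, show ¬ (i:ℕ) = 2 by omega,
        show ¬ (i:ℕ) = 3 by omega, h]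
      try ring
      try exact fun h' => absurd h' (by omega)
  calc (Amat n).mulVec (fun i => a i * PsiB n ξ i) 2
      = ∑ i : Fin (2*n+4), Amat n 2 i * (a i * PsiB n ξ i) := rfl
    _ = ∑ i : Fin (2*n+4), (((if (i:ℕ) = 2 then a i * ξ 1 else 0)
        + (if (i:ℕ) = 3 then a i * (ξ 2 / ξ 0) else 0))
        + (if 4 ≤ (i:ℕ) then a i else 0) * ξ 2) :=
        Finset.sum_congr rfl fun i _ => key i
    _ = (∑ i : Fin (2*n+4), ((if (i:ℕ) = 2 then a i * ξ 1 else 0)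
        + (if (i:ℕ) = 3 then a i * (ξ 2 / ξ 0) else 0)))
        + (∑ i : Fin (2*n+4), (if 4 ≤ (i:ℕ) then a i else 0) * ξ 2) :=
        Finset.sum_add_distrib
    _ = _ := by
        rw [← Finset.sum_mul, Finset.sum_add_distrib,
          sum_ite_val n 2 (by omega), sum_ite_val n 3 (by omega)]

lemma key_real (a0 a1 a2 a3 c1 c2 c3 p q r p' q' r' : ℝ)
    (ha0 : 0 < a0) (ha1 : 0 < a1) (ha2 : 0 < a2) (ha3 : 0 < a3)
    (hc1 : 0 < c1) (hc2 : 0 < c2) (hc3 : 0 < c3)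
    (hp : 0 < p) (hq : 0 < q) (hr : 0 < r) (hp' : 0 < p') (hq' : 0 < q') (hr' : 0 < r')
    (hrr : r ≤ r')
    (e1 : a0*(r/q) + c1*r = a0*(r'/q') + c1*r')
    (e2 : a1*p + c2*r = a1*p' + c2*r')
    (e3 : a2*q + a3*(r/p) + c3*r = a2*q' + a3*(r'/p') + c3*r') :
    p = p' ∧ q = q' ∧ r = r' := by
  have hd1 : r'/q' ≤ r/q := by
    have h : a0*(r'/q') ≤ a0*(r/q) := by nlinarith [mul_nonneg hc1.le (sub_nonneg.2 hrr)]
    exact le_of_mul_le_mul_left h ha0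
  have hqq : q ≤ q' := by
    rw [div_le_div_iff₀ hq' hq] at hd1
    nlinarith
  have hd2 : r'/p' ≤ r/p := by
    have h : a3*(r'/p') ≤ a3*(r/p) := by
      nlinarith [mul_nonneg hc3.le (sub_nonneg.2 hrr), mul_nonneg ha2.le (sub_nonneg.2 hqq)]
    exact le_of_mul_le_mul_left h ha3
  have hpp : p ≤ p' := by
    rw [div_le_div_iff₀ hp' hp] at hd2
    nlinarith
  have hre : r = r' := by
    have : r' ≤ r := by nlinarith [mul_le_mul_of_nonneg_left hpp ha1.le]
    linarith
  have hpe : p = p' := by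
    have : a1 * p = a1 * p' := by nlinarith
    exact mul_left_cancel₀ ha1.ne' this
  have hqe : q = q' := by
    have : a2 * q = a2 * q' := by
      rw [hre, hpe] at e3; linarith
    exact mul_left_cancel₀ ha2.ne' this
  exact ⟨hpe, hqe, hre⟩

/-- For every positive vector `a`, the map `ξ ↦ 𝒜·(a ∘ Ψ_B(ξ))` (with `∘` the
componentwise product) is injective on positive vectors `ξ`. -/
theorem injectivity_of_monomial_map (n : ℕ) (hn : 1 ≤ n)
    (a : Fin (2*n+4) → ℝ) (ha : ∀ i, 0 < a i) :
    ∀ ξ ξ' : Fin 3 → ℝ, (∀ j, 0 < ξ j) → (∀ j, 0 < ξ' j) →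
      (Amat n).mulVec (fun i => a i * PsiB n ξ i)
        = (Amat n).mulVec (fun i => a i * PsiB n ξ' i) →
      ξ = ξ' := by
  intro ξ ξ' hξ hξ' heq
  have hc1 : 0 < ∑ i : Fin (2*n+4), if 4 ≤ (i:ℕ) ∧ (i:ℕ) % 2 = 0 then a i else 0 := by
    apply Finset.sum_pos'
    · intro i _; split
      · exact (ha i).le
      · exact le_rfl
    · exact ⟨⟨4, by omega⟩, Finset.mem_univ _, by simpa using (ha ⟨4, by omega⟩)⟩
  have hc2 : 0 < ∑ i : Fin (2*n+4), if 4 ≤ (i:ℕ) ∧ (i:ℕ) % 2 = 1 then a i else 0 := by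
    apply Finset.sum_pos'
    · intro i _; split
      · exact (ha i).le
      · exact le_rfl
    · exact ⟨⟨5, by omega⟩, Finset.mem_univ _, by simpa using (ha ⟨5, by omega⟩)⟩
  have hc3 : 0 < ∑ i : Fin (2*n+4), if 4 ≤ (i:ℕ) then a i else 0 := by
    apply Finset.sum_pos'
    · intro i _; split
      · exact (ha i).le
      · exact le_rfl
    · exact ⟨⟨4, by omega⟩, Finset.mem_univ _, by simpa using (ha ⟨4, by omega⟩)⟩
  have e1 := congrFun heq 0
  have e2 := congrFun heq 1
  have e3 := congrFun heq 2
  rw [row0_eval n a ξ (hξ 1), row0_eval n a ξ' (hξ' 1)] at e1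
  rw [row1_eval n a ξ, row1_eval n a ξ'] at e2
  rw [row2_eval n a ξ (hξ 0), row2_eval n a ξ' (hξ' 0)] at e3
  rcases le_total (ξ 2) (ξ' 2) with hle | hle
  · obtain ⟨hp, hq, hr⟩ := key_real _ _ _ _ _ _ _ _ _ _ _ _ _ (ha _) (ha _) (ha _) (ha _)
      hc1 hc2 hc3 (hξ 0) (hξ 1) (hξ 2) (hξ' 0) (hξ' 1) (hξ' 2) hle e1 e2 e3
    funext j; fin_cases j
    · exact hp
    · exact hq
    · exact hr
  · obtain ⟨hp, hq, hr⟩ := key_real _ _ _ _ _ _ _ _ _ _ _ _ _ (ha _) (ha _) (ha _) (ha _)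
      hc1 hc2 hc3 (hξ' 0) (hξ' 1) (hξ' 2) (hξ 0) (hξ 1) (hξ 2) hle e1.symm e2.symm e3.symm
    funext j; fin_cases j
    · exact hp.symm
    · exact hq.symm
    · exact hr.symm

end
end
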